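/- arXiv:2506.23651 — 8 statements merged into one kernel-verified Lean document; each statement's English description precedes it below -/
import Mathlib

section
/- The free-category monad endofunctor T₁ := Cat.free ⋙ Quiv.forget on the category Quiv of quivers — sending a quiver X to the quiver with the same vertices whose arrows are the paths in X — is a parametric right adjoint: Quiv has a terminal object ⊤, and the induced functor Quiv ⥤ Over (T₁.obj ⊤), sending X to the object of the slice given by T₁ applied to the unique morphism X ⟶ ⊤, has a left adjoint. -/
open CategoryTheory CategoryTheory.Limits

universe u

/-- The carrier of the terminal quiver: one vertex and one arrow. -/
def TerminalQuiverCarrier : Type u := PUnit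

instance : Quiver.{u} TerminalQuiverCarrier.{u} := ⟨fun _ _ => PUnit⟩

/-- The terminal object of `Quiv`: one vertex and one arrow. -/
def terminalQuiv : Quiv.{u, u} := Quiv.of TerminalQuiverCarrier.{u}

instance (X : Quiv.{u, u}) : Subsingleton (X ⟶ terminalQuiv.{u}) := by
  constructor
  intro F G
  fapply Prefunctor.ext
  · intro x
    exact Subsingleton.elim (α := PUnit) _ _
  · intro x y f
    exact Subsingleton.elim (α := PUnit) _ _

instance (X : Quiv.{u, u}) : Nonempty (X ⟶ terminalQuiv.{u}) :=
  ⟨{ obj := fun _ => PUnit.unit, map := fun _ => PUnit.unit }⟩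

/-- `Quiv` has a terminal object. -/
instance : HasTerminal Quiv.{u, u} := hasTerminal_of_unique terminalQuiv.{u}

/-- The canonical comparison functor `A ⥤ Over (G.obj ⊤_A)` of a functor `G : A ⥤ B`,
sending `X` to `G.map (terminal.from X)`. -/
noncomputable def CategoryTheory.Functor.praComparison {A : Type*} [Category A] {B : Type*}
    [Category B] [HasTerminal A] (G : A ⥤ B) : A ⥤ Over (G.obj (⊤_ A)) where
  obj X := Over.mk (G.map (terminal.from X))
  map {X Y} f := Over.homMk (G.map f) (by simp [← Functor.map_comp])

/-- A functor `G : A ⥤ B` (with `A` having a terminal object) is a *parametric right adjoint*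
if the induced functor `A ⥤ Over (G.obj ⊤_A)` has a left adjoint. -/
def CategoryTheory.Functor.IsParametricRightAdjoint {A : Type*} [Category A] {B : Type*}
    [Category B] [HasTerminal A] (G : A ⥤ B) : Prop :=
  G.praComparison.IsRightAdjoint

open Quiver
namespace PRA

variable {V : Type*} [Quiver V] {W : Type*} [Quiver W]

/-- The `i`-th vertex of a path (clamped at the endpoints). -/
def nthVert {a : V} : ∀ {b : V}, Path a b → ℕ → V
  | _, .nil, _ => a
  | b, .cons p _, i => if i ≤ p.length then nthVert p i else b

@[simp] lemma nthVert_nil {a : V} (i : ℕ) : nthVert (.nil : Path a a) i = a := rfl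

lemma nthVert_cons_le {a b c : V} {p : Path a b} {e : b ⟶ c} {i : ℕ} (h : i ≤ p.length) :
    nthVert (p.cons e) i = nthVert p i := if_pos h

lemma nthVert_cons_gt {a b c : V} {p : Path a b} {e : b ⟶ c} {i : ℕ} (h : ¬ i ≤ p.length) :
    nthVert (p.cons e) i = c := if_neg h

@[simp] lemma nthVert_zero {a b : V} (p : Path a b) : nthVert p 0 = a := by
  induction p with
  | nil => rfl
  | cons p e ih => rw [nthVert_cons_le (Nat.zero_le _), ih]

lemma nthVert_of_le {a b : V} (p : Path a b) {i : ℕ} (h : p.length ≤ i) : nthVert p i = b := by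
  induction p with
  | nil => rfl
  | cons p e ih =>
    rw [Path.length_cons] at h
    rw [nthVert_cons_gt (by omega)]

/-- The `i`-th edge of a path. -/
def nthEdge {a : V} : ∀ {b : V} (p : Path a b) (i : ℕ), i < p.length →
    (nthVert p i ⟶ nthVert p (i + 1))
  | _, .nil, _, h => absurd h (by simp)
  | _, .cons p e, i, h =>
    if h' : i < p.length then
      (nthEdge p i h').cast (nthVert_cons_le h'.le).symm (nthVert_cons_le h').symm
    else
      e.cast (by rw [nthVert_cons_le (by simp at h; omega), nthVert_of_le p (by omega)])
        (by rw [nthVert_cons_gt (by omega)])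

lemma nthEdge_cons_lt {a b c : V} {p : Path a b} (e : b ⟶ c) {i : ℕ} (h : i < p.length)
    (h' : i < (p.cons e).length) : HEq (nthEdge (p.cons e) i h') (nthEdge p i h) := by
  rw [nthEdge, dif_pos h]
  exact Hom.cast_heq _ _ _

lemma nthEdge_cons_last {a b c : V} {p : Path a b} (e : b ⟶ c)
    (h' : p.length < (p.cons e).length) : HEq (nthEdge (p.cons e) p.length h') e := by
  rw [nthEdge, dif_neg (lt_irrefl _)]
  exact Hom.cast_heq _ _ _

lemma heq_nthVert {a b a' b' : V} {p : Path a b} {q : Path a' b'} (hpq : HEq p q)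
    (ha : a = a') (hb : b = b') (i : ℕ) : nthVert p i = nthVert q i := by
  subst ha; subst hb; rw [eq_of_heq hpq]

lemma heq_length {a b a' b' : V} {p : Path a b} {q : Path a' b'} (hpq : HEq p q)
    (ha : a = a') (hb : b = b') : p.length = q.length := by
  subst ha; subst hb; rw [eq_of_heq hpq]

lemma heq_nthEdge {a b a' b' : V} {p : Path a b} {q : Path a' b'} (hpq : HEq p q)
    (ha : a = a') (hb : b = b') (i : ℕ) (h₁ : i < p.length) (h₂ : i < q.length) :
    HEq (nthEdge p i h₁) (nthEdge q i h₂) := by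
  subst ha; subst hb; obtain rfl := eq_of_heq hpq; rfl

lemma nthVert_cast {a b a' b' : V} (hu : a = a') (hv : b = b') (p : Path a b) (i : ℕ) :
    nthVert (p.cast hu hv) i = nthVert p i := by subst hu; subst hv; rfl

lemma length_cast {a b a' b' : V} (hu : a = a') (hv : b = b') (p : Path a b) :
    (p.cast hu hv).length = p.length := by subst hu; subst hv; rfl

lemma nthEdge_cast {a b a' b' : V} (hu : a = a') (hv : b = b') (p : Path a b) (i : ℕ)
    (h₁ : i < (p.cast hu hv).length) (h₂ : i < p.length) :
    HEq (nthEdge (p.cast hu hv) i h₁) (nthEdge p i h₂) := by subst hu; subst hv; rfl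

lemma mapPath_length (Φ : V ⥤q W) {a b : V} (p : Path a b) :
    (Φ.mapPath p).length = p.length := by
  induction p with
  | nil => rfl
  | cons p e ih => simp [Prefunctor.mapPath_cons, ih]

lemma map_congr_heq (Φ : V ⥤q W) {x y x' y' : V} (hx : x = x') (hy : y = y')
    {f : x ⟶ y} {g : x' ⟶ y'} (h : HEq f g) : HEq (Φ.map f) (Φ.map g) := by
  subst hx; subst hy; rw [eq_of_heq h]

lemma nthVert_mapPath (Φ : V ⥤q W) {a b : V} (p : Path a b) (i : ℕ) :
    nthVert (Φ.mapPath p) i = Φ.obj (nthVert p i) := by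
  induction p with
  | nil => simp [Prefunctor.mapPath_nil]
  | cons p e ih =>
    rw [Prefunctor.mapPath_cons]
    by_cases h : i ≤ p.length
    · rw [nthVert_cons_le (by rw [mapPath_length]; exact h), nthVert_cons_le h, ih]
    · rw [nthVert_cons_gt (by rw [mapPath_length]; exact h), nthVert_cons_gt h]

lemma nthEdge_congr_idx {a b : V} (p : Path a b) {i j : ℕ} (hij : i = j)
    (h₁ : i < p.length) (h₂ : j < p.length) : HEq (nthEdge p i h₁) (nthEdge p j h₂) := by
  subst hij; rfl

lemma nthEdge_mapPath (Φ : V ⥤q W) {a b : V} (p : Path a b) (i : ℕ)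
    (h : i < (Φ.mapPath p).length) (h' : i < p.length) :
    HEq (nthEdge (Φ.mapPath p) i h) (Φ.map (nthEdge p i h')) := by
  induction p with
  | nil => exact absurd h' (by simp)
  | cons p e ih =>
    rcases Nat.lt_or_ge i p.length with hlt | hge
    · exact ((nthEdge_cons_lt (Φ.map e) (by rwa [mapPath_length])
        (show i < ((Φ.mapPath p).cons (Φ.map e)).length from h)).trans
        (ih (by rwa [mapPath_length]) hlt)).trans
        (map_congr_heq Φ (nthVert_cons_le hlt.le).symm (nthVert_cons_le hlt).symm
          (nthEdge_cons_lt e hlt h').symm)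
    · have hi : i = p.length := by simp [Path.length_cons] at h'; omega
      subst hi
      refine HEq.trans (HEq.trans ?_ (nthEdge_cons_last (Φ.map e)
          (show (Φ.mapPath p).length < ((Φ.mapPath p).cons (Φ.map e)).length by simp)))
        (map_congr_heq Φ (by rw [nthVert_cons_le le_rfl, nthVert_of_le p le_rfl])
          (by rw [nthVert_cons_gt (by omega)]) (nthEdge_cons_last e h')).symm
      exact nthEdge_congr_idx _ (mapPath_length Φ p).symm _ _

lemma path_ext {a : V} : ∀ {b : V} (p₁ p₂ : Path a b), p₁.length = p₂.length →
    (∀ i, nthVert p₁ i = nthVert p₂ i) →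
    (∀ i h₁ h₂, HEq (nthEdge p₁ i h₁) (nthEdge p₂ i h₂)) → p₁ = p₂
  | _, .nil, .nil, _, _, _ => rfl
  | _, .nil, .cons _ _, hl, _, _ => by simp at hl
  | _, .cons _ _, .nil, hl, _, _ => by simp at hl
  | b, .cons p e, .cons q f, hl, hv, he => by
    simp only [Path.length_cons, Nat.add_right_cancel_iff] at hl
    have h1 := hv p.length
    rw [nthVert_cons_le le_rfl, nthVert_of_le p le_rfl, nthVert_cons_le hl.le,
      nthVert_of_le q hl.ge] at h1
    subst h1
    obtain rfl : e = f := by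
      refine eq_of_heq (((nthEdge_cons_last e (by simp)).symm.trans
        (he p.length (by simp) (by simp [hl]))).trans
        ((nthEdge_congr_idx _ hl _ _).trans (nthEdge_cons_last f (by simp))))
    obtain rfl : p = q := by
      refine path_ext p q hl (fun i => ?_) (fun i h₁ h₂ => ?_)
      · rcases le_or_gt i p.length with hle | hgt
        · have h1 := hv i
          rwa [nthVert_cons_le hle, nthVert_cons_le (hl ▸ hle)] at h1
        · rw [nthVert_of_le p (by omega), nthVert_of_le q (by omega)]
      · exact ((nthEdge_cons_lt e h₁ (by simp; omega)).symm.trans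
          (he i (by simp; omega) (by simp; omega))).trans (nthEdge_cons_lt e h₂ (by simp; omega))
    rfl

end PRA

section Terminal
open PRA

/-- `terminalQuiv` is terminal. -/
noncomputable def terminalQuivIsTerminal : IsTerminal terminalQuiv.{u} :=
  IsTerminal.ofUniqueHom (fun _ => Classical.arbitrary _) (fun _ _ => Subsingleton.elim _ _)

lemma prefunctor_congr_obj {V W : Type*} [Quiver V] [Quiver W] {F G : V ⥤q W} (h : F = G)
    (x : V) : F.obj x = G.obj x := by rw [h]

lemma prefunctor_congr_map {V W : Type*} [Quiver V] [Quiver W] {F G : V ⥤q W} (h : F = G)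
    {x y : V} (f : x ⟶ y) : HEq (F.map f) (G.map f) := by rw [h]

lemma prefunctor_ext_heq {V W : Type*} [Quiver V] [Quiver W] {F G : V ⥤q W}
    (hobj : ∀ x, F.obj x = G.obj x)
    (hmap : ∀ {x y : V} (f : x ⟶ y), HEq (F.map f) (G.map f)) : F = G := by
  obtain ⟨Fo, Fm⟩ := F
  obtain ⟨Go, Gm⟩ := G
  obtain rfl : Fo = Go := funext hobj
  congr 1
  funext x y f
  exact eq_of_heq (hmap f)

/-- Any two vertices of the chosen terminal quiver are equal. -/
lemma top_vert_eq (x y : (⊤_ Quiv.{u, u})) : x = y := by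
  have e := terminalIsoIsTerminal terminalQuivIsTerminal.{u}
  have h : e.hom ≫ e.inv = 𝟙 (⊤_ Quiv.{u, u}) := e.hom_inv_id
  have hx := prefunctor_congr_obj h x
  have hy := prefunctor_congr_obj h y
  change e.inv.obj (e.hom.obj x) = x at hx
  change e.inv.obj (e.hom.obj y) = y at hy
  rw [← hx, ← hy]
  exact congrArg e.inv.obj (Subsingleton.elim (α := PUnit) _ _)

/-- Any two parallel arrows of the chosen terminal quiver are equal. -/
lemma top_hom_eq {x y : (⊤_ Quiv.{u, u})} (f g : x ⟶ y) : f = g := by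
  have e := terminalIsoIsTerminal terminalQuivIsTerminal.{u}
  have h : e.hom ≫ e.inv = 𝟙 (⊤_ Quiv.{u, u}) := e.hom_inv_id
  have hf : HEq (e.inv.map (e.hom.map f)) f := prefunctor_congr_map h f
  have hg : HEq (e.inv.map (e.hom.map g)) g := prefunctor_congr_map h g
  have : e.hom.map f = e.hom.map g := Subsingleton.elim (α := PUnit) _ _
  rw [this] at hf
  exact eq_of_heq (hf.symm.trans hg)

/-- Paths with the same endpoints and the same length in the terminal quiver are equal. -/
lemma top_path_eq {x : (⊤_ Quiv.{u, u})} :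
    ∀ {y : (⊤_ Quiv.{u, u})} (p q : Quiver.Path x y), p.length = q.length → p = q
  | _, .nil, .nil, _ => rfl
  | _, .nil, .cons _ _, hl => by simp at hl
  | _, .cons _ _, .nil, hl => by simp at hl
  | y, @Quiver.Path.cons _ _ _ c₁ _ p e, @Quiver.Path.cons _ _ _ c₂ _ q f, hl => by
    simp only [Quiver.Path.length_cons, Nat.add_right_cancel_iff] at hl
    obtain rfl := top_vert_eq.{u} c₁ c₂
    rw [top_path_eq p q hl, top_hom_eq e f]

lemma top_path_heq {x y x' y' : (⊤_ Quiv.{u, u})} {p : Quiver.Path x y} {q : Quiver.Path x' y'}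
    (hx : x = x') (hy : y = y') (h : p.length = q.length) : HEq p q := by
  subst hx; subst hy
  exact heq_of_eq (top_path_eq p q h)

end Terminal


namespace PRA

open Quiver

section Construction

variable {Y : Quiv.{u, u}} (ℓ : Y ⟶ (Cat.free ⋙ Quiv.forget).obj (⊤_ Quiv.{u, u}))

/-- The type of edges of a quiver, bundled with their endpoints. -/
def E0 (Y : Quiv.{u, u}) : Type u := Σ a b : Y, a ⟶ b

/-- The length assigned to a bundled edge by `ℓ`. -/
noncomputable def len (s : E0 Y) : ℕ := Quiver.Path.length (ℓ.map s.2.2)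

/-- Vertices of the would-be initial object, before quotienting: the vertices of `Y` together
with `len s - 1` new interior vertices for each edge `s`. -/
noncomputable abbrev Wt : Type u := (Y : Type u) ⊕ Σ s : E0 Y, Fin (len ℓ s - 1)

/-- Both endpoints of a length-0 edge must be identified. -/
def relW : Wt ℓ → Wt ℓ → Prop := fun v w =>
  ∃ s : E0 Y, len ℓ s = 0 ∧ v = Sum.inl s.1 ∧ w = Sum.inl s.2.1

/-- Vertices of the would-be initial object. -/
noncomputable def Vt : Type u := Quot (relW ℓ)

/-- The `i`-th vertex along the subdivision of the edge `s` (clamped at the endpoints). -/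
noncomputable def pt (s : E0 Y) (i : ℕ) : Wt ℓ :=
  if h0 : i = 0 then Sum.inl s.1
  else if h : i < len ℓ s then Sum.inr ⟨s, ⟨i - 1, by omega⟩⟩
  else Sum.inl s.2.1

/-- `pt`, in the quotient. -/
noncomputable def vtx (s : E0 Y) (i : ℕ) : Vt ℓ := Quot.mk _ (pt ℓ s i)

noncomputable instance instQuiverVt : Quiver.{u, u} (Vt ℓ) where
  Hom v w := { si : Σ s : E0 Y, Fin (len ℓ s) //
    vtx ℓ si.1 si.2 = v ∧ vtx ℓ si.1 (si.2 + 1) = w }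

/-- The would-be initial object: `Y` with each edge of length `n` subdivided into `n` pieces. -/
noncomputable def LQ : Quiv.{u, u} := Quiv.of (Vt ℓ)

lemma vtx_zero (s : E0 Y) : vtx ℓ s 0 = Quot.mk _ (Sum.inl s.1) := by simp [vtx, pt]; rfl

lemma vtx_last (s : E0 Y) : vtx ℓ s (len ℓ s) = Quot.mk _ (Sum.inl s.2.1) := by
  rcases Nat.eq_zero_or_pos (len ℓ s) with h | h
  · rw [vtx, h, pt]
    simp only [dif_pos rfl]
    exact Quot.sound ⟨s, h, rfl, rfl⟩
  · rw [vtx, pt, dif_neg (by omega), dif_neg (by omega)]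

/-- The `i`-th piece of the subdivision of the edge `s`, as an edge of `LQ`. -/
noncomputable def seg (s : E0 Y) (i : ℕ) (h : i < len ℓ s) :
    @Quiver.Hom (Vt ℓ) _ (vtx ℓ s i) (vtx ℓ s (i + 1)) := ⟨⟨s, ⟨i, h⟩⟩, rfl, rfl⟩

/-- The path in `LQ` made of the first `m` pieces of the subdivision of `s`. -/
noncomputable def pathUpTo (s : E0 Y) : (m : ℕ) → m ≤ len ℓ s → Quiver.Path (vtx ℓ s 0) (vtx ℓ s m)
  | 0, _ => .nil
  | m + 1, h => (pathUpTo s m (by omega)).cons (seg ℓ s m (by omega))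

lemma pathUpTo_succ (s : E0 Y) (m : ℕ) (h : m + 1 ≤ len ℓ s) :
    pathUpTo ℓ s (m + 1) h = (pathUpTo ℓ s m (by omega)).cons (seg ℓ s m (by omega)) := rfl

lemma pathUpTo_length (s : E0 Y) (m : ℕ) (h : m ≤ len ℓ s) :
    (pathUpTo ℓ s m h).length = m := by
  induction m with
  | zero => rfl
  | succ m ih => rw [pathUpTo_succ, Quiver.Path.length_cons, ih]

lemma nthVert_pathUpTo (s : E0 Y) (m : ℕ) (h : m ≤ len ℓ s) (i : ℕ) (hi : i ≤ m) :
    nthVert (pathUpTo ℓ s m h) i = vtx ℓ s i := by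
  induction m with
  | zero => obtain rfl : i = 0 := by omega
            rfl
  | succ m ih =>
    rw [pathUpTo_succ]
    rcases le_or_gt i m with hle | hgt
    · rw [nthVert_cons_le (by rw [pathUpTo_length]; exact hle), ih (by omega) hle]
    · obtain rfl : i = m + 1 := by omega
      rw [nthVert_cons_gt (by rw [pathUpTo_length]; omega)]

lemma nthEdge_pathUpTo (s : E0 Y) (m : ℕ) (h : m ≤ len ℓ s) (i : ℕ)
    (h' : i < (pathUpTo ℓ s m h).length) (hi : i < len ℓ s) :
    HEq (nthEdge (pathUpTo ℓ s m h) i h') (seg ℓ s i hi) := by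
  induction m with
  | zero => rw [pathUpTo_length] at h'; omega
  | succ m ih =>
    have h'' := h'
    rw [pathUpTo_length] at h''
    have hcast : HEq (nthEdge (pathUpTo ℓ s (m + 1) h) i h')
        (nthEdge ((pathUpTo ℓ s m (by omega)).cons (seg ℓ s m (by omega))) i
          (by rw [Quiver.Path.length_cons, pathUpTo_length]; exact h'')) := by
      congr 1
    refine hcast.trans ?_
    rcases Nat.lt_or_ge i m with hlt | hge
    · exact (nthEdge_cons_lt _ (by rw [pathUpTo_length]; exact hlt) _).trans
        (ih (by omega) (by rw [pathUpTo_length]; exact hlt))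
    · obtain rfl : i = m := by omega
      exact (nthEdge_congr_idx _ (pathUpTo_length ℓ s i (by omega)).symm _ _).trans
        (nthEdge_cons_last _ (by simp))

/-- The unit of the adjunction: `Y ⟶ T (LQ ℓ)`, sending each edge to its subdivision. -/
noncomputable def eta : Y ⟶ (Cat.free ⋙ Quiv.forget).obj (LQ ℓ) where
  obj a := Quot.mk _ (Sum.inl a)
  map {a b} e :=
    (pathUpTo ℓ ⟨a, b, e⟩ (len ℓ ⟨a, b, e⟩) le_rfl).cast
      (vtx_zero ℓ ⟨a, b, e⟩) (vtx_last ℓ ⟨a, b, e⟩)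

lemma eta_map_length {a b : Y} (e : a ⟶ b) :
    Quiver.Path.length ((eta ℓ).map e) = len ℓ ⟨a, b, e⟩ := by
  show Quiver.Path.length ((pathUpTo ℓ ⟨a, b, e⟩ (len ℓ ⟨a, b, e⟩) le_rfl).cast
      (vtx_zero ℓ ⟨a, b, e⟩) (vtx_last ℓ ⟨a, b, e⟩)) = len ℓ ⟨a, b, e⟩
  erw [length_cast, pathUpTo_length]

lemma eta_w : eta ℓ ≫ (Cat.free ⋙ Quiv.forget).map (terminal.from (LQ ℓ)) = ℓ := by
  apply prefunctor_ext_heq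
  · intro a
    exact top_vert_eq _ _
  · intro a b e
    refine top_path_heq (top_vert_eq _ _) (top_vert_eq _ _) ?_
    show Quiver.Path.length
      (Prefunctor.mapPath (terminal.from (LQ ℓ)) ((eta ℓ).map e)) = len ℓ ⟨a, b, e⟩
    erw [mapPath_length, eta_map_length]


lemma nthVert_eta {a b : Y} (e : a ⟶ b) (i : ℕ) (hi : i ≤ len ℓ ⟨a, b, e⟩) :
    nthVert ((eta ℓ).map e) i = vtx ℓ ⟨a, b, e⟩ i := by
  show nthVert ((pathUpTo ℓ ⟨a, b, e⟩ (len ℓ ⟨a, b, e⟩) le_rfl).cast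
    (vtx_zero ℓ ⟨a, b, e⟩) (vtx_last ℓ ⟨a, b, e⟩)) i = _
  erw [nthVert_cast, nthVert_pathUpTo ℓ ⟨a, b, e⟩ _ le_rfl i hi]

lemma nthEdge_eta {a b : Y} (e : a ⟶ b) (i : ℕ) (h : i < Quiver.Path.length ((eta ℓ).map e))
    (hi : i < len ℓ ⟨a, b, e⟩) :
    HEq (nthEdge ((eta ℓ).map e) i h) (seg ℓ ⟨a, b, e⟩ i hi) := by
  refine HEq.trans (nthEdge_cast (vtx_zero ℓ ⟨a, b, e⟩) (vtx_last ℓ ⟨a, b, e⟩)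
    (pathUpTo ℓ ⟨a, b, e⟩ (len ℓ ⟨a, b, e⟩) le_rfl) i ?_ ?_) ?_
  · exact h
  · erw [pathUpTo_length]; exact hi
  · exact nthEdge_pathUpTo ℓ ⟨a, b, e⟩ _ le_rfl i _ hi


section Factor

variable {X : Quiv.{u, u}} (F : Y ⟶ (Cat.free ⋙ Quiv.forget).obj X)
  (hF : F ≫ (Cat.free ⋙ Quiv.forget).map (terminal.from X) = ℓ)

include hF

lemma F_len {a b : Y} (e : a ⟶ b) :
    Quiver.Path.length (F.map e) = len ℓ ⟨a, b, e⟩ := by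
  have h := prefunctor_congr_map hF e
  have := heq_length h (prefunctor_congr_obj hF a) (prefunctor_congr_obj hF b)
  erw [len, ← this]
  exact (mapPath_length (terminal.from X) (F.map e)).symm

/-- The factorizing prefunctor, on unquotiented vertices. -/
noncomputable def Gobj : Wt ℓ → X
  | .inl a => F.obj a
  | .inr ⟨s, j⟩ => nthVert (F.map s.2.2) (j + 1)

/-- The factorizing prefunctor, on vertices. -/
noncomputable def Gq : Vt ℓ → X :=
  Quot.lift (Gobj ℓ F) (by
    rintro v w ⟨s, h0, rfl, rfl⟩
    show F.obj s.1 = F.obj s.2.1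
    exact @Quiver.Path.eq_of_length_zero ↑X _ _ _ (F.map s.2.2) (by rw [F_len ℓ F hF]; exact h0))

lemma Gq_vtx (s : E0 Y) (i : ℕ) (hi : i ≤ len ℓ s) :
    Gq ℓ F hF (vtx ℓ s i) = nthVert (F.map s.2.2) i := by
  show Gobj ℓ F (pt ℓ s i) = _
  by_cases h0 : i = 0
  · subst h0
    rw [pt, dif_pos rfl]
    exact (nthVert_zero _).symm
  · rw [pt, dif_neg h0]
    by_cases h1 : i < len ℓ s
    · rw [dif_pos h1]
      show nthVert (F.map s.2.2) (i - 1 + 1) = _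
      congr 1
      omega
    · rw [dif_neg h1]
      exact (nthVert_of_le _ (by erw [F_len ℓ F hF]; show len ℓ s ≤ i; omega)).symm

/-- The factorizing prefunctor. -/
noncomputable def G : LQ ℓ ⟶ X where
  obj := Gq ℓ F hF
  map {v w} σ :=
    (nthEdge (F.map σ.1.1.2.2) σ.1.2
        (by rw [F_len ℓ F hF]; show (σ.1.2 : ℕ) < len ℓ σ.1.1; exact σ.1.2.2)).cast
      ((Gq_vtx ℓ F hF σ.1.1 σ.1.2 (le_of_lt σ.1.2.2)).symm.trans
        (congrArg (Gq ℓ F hF) σ.2.1))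
      ((Gq_vtx ℓ F hF σ.1.1 (σ.1.2 + 1) σ.1.2.2).symm.trans
        (congrArg (Gq ℓ F hF) σ.2.2))

lemma G_fact : eta ℓ ≫ (Cat.free ⋙ Quiv.forget).map (G ℓ F hF) = F := by
  apply prefunctor_ext_heq
  · intro a
    rfl
  · intro a b e
    refine heq_of_eq (path_ext _ _ ?_ ?_ ?_)
    · show Quiver.Path.length (Prefunctor.mapPath (G ℓ F hF) ((eta ℓ).map e)) = _
      erw [mapPath_length, eta_map_length, F_len ℓ F hF]
    · intro i
      show nthVert (Prefunctor.mapPath (G ℓ F hF) ((eta ℓ).map e)) i = nthVert (F.map e) i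
      erw [nthVert_mapPath]
      rcases le_or_gt i (len ℓ ⟨a, b, e⟩) with hi | hi
      · rw [nthVert_eta ℓ e i hi]
        exact Gq_vtx ℓ F hF ⟨a, b, e⟩ i hi
      · rw [nthVert_of_le ((eta ℓ).map e) (by rw [eta_map_length]; omega),
          nthVert_of_le (F.map e) (by rw [F_len ℓ F hF]; omega)]
        rfl
    · intro i h₁ h₂
      have hi : i < len ℓ ⟨a, b, e⟩ := by
        erw [F_len ℓ F hF] at h₂; exact h₂
      have h₁' : i < Quiver.Path.length ((eta ℓ).map e) := by
        rw [eta_map_length]; exact hi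
      refine HEq.trans (nthEdge_mapPath (G ℓ F hF) ((eta ℓ).map e) i h₁ h₁') ?_
      refine HEq.trans (map_congr_heq (G ℓ F hF)
        (nthVert_eta ℓ e i hi.le) (nthVert_eta ℓ e (i + 1) hi)
        (nthEdge_eta ℓ e i h₁' hi)) ?_
      refine HEq.trans (heq_of_eq (show (G ℓ F hF).map (seg ℓ ⟨a, b, e⟩ i hi) =
        (nthEdge (F.map e) i (by rw [F_len ℓ F hF]; exact hi)).cast
          ((Gq_vtx ℓ F hF ⟨a, b, e⟩ i hi.le).symm)
          ((Gq_vtx ℓ F hF ⟨a, b, e⟩ (i + 1) hi).symm) from rfl)) ?_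
      exact Hom.cast_heq _ _ _

lemma G_unique (G' : LQ ℓ ⟶ X)
    (hfac : eta ℓ ≫ (Cat.free ⋙ Quiv.forget).map G' = F) : G' = G ℓ F hF := by
  have hO : ∀ a : Y, G'.obj (Quot.mk _ (Sum.inl a)) = F.obj a := fun a =>
    prefunctor_congr_obj hfac a
  have hM : ∀ {a b : Y} (e : a ⟶ b),
      HEq (Prefunctor.mapPath G' ((eta ℓ).map e)) (F.map e) := fun e =>
    prefunctor_congr_map hfac e
  apply prefunctor_ext_heq
  · intro v
    induction v using Quot.ind with
    | _ w =>
      rcases w with a | ⟨⟨a, b, e⟩, j⟩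
      · exact hO a
      · have hv : vtx ℓ ⟨a, b, e⟩ (j + 1) = Quot.mk _ (Sum.inr ⟨⟨a, b, e⟩, j⟩) := by
          erw [vtx, pt, dif_neg (by omega), dif_pos (by omega)]
          have : (⟨j + 1 - 1, by omega⟩ : Fin (len ℓ ⟨a, b, e⟩ - 1)) = j := by
            apply Fin.ext
            simp
          rw [this]
        rw [← hv]
        have h1 := heq_nthVert (hM e) (hO a) (hO b) (j + 1)
        erw [nthVert_mapPath] at h1
        rw [nthVert_eta ℓ e (j + 1) (by omega)] at h1
        exact h1.trans (Gq_vtx ℓ F hF ⟨a, b, e⟩ (j + 1) (by omega)).symm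
  · intro v w σ
    obtain ⟨⟨⟨a, b, e⟩, i⟩, h1, h2⟩ := σ
    subst h1
    subst h2
    have hi : (i : ℕ) < len ℓ ⟨a, b, e⟩ := i.2
    have h₂ : (i : ℕ) < Quiver.Path.length (F.map e) := by rw [F_len ℓ F hF]; exact hi
    have h₁ : (i : ℕ) <
        Quiver.Path.length (Prefunctor.mapPath G' ((eta ℓ).map e)) := by
      erw [mapPath_length, eta_map_length]; exact hi
    have h₁' : (i : ℕ) < Quiver.Path.length ((eta ℓ).map e) := by
      rw [eta_map_length]; exact hi
    have key := heq_nthEdge (hM e) (hO a) (hO b) i h₁ h₂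
    have e1 := nthEdge_mapPath G' ((eta ℓ).map e) i h₁ h₁'
    have e2 := map_congr_heq G' (nthVert_eta ℓ e i hi.le) (nthVert_eta ℓ e (i + 1) hi)
      (nthEdge_eta ℓ e i h₁' hi)
    refine HEq.trans ?_ (HEq.trans (e1.symm.trans key)
      (((heq_of_eq (show (G ℓ F hF).map (seg ℓ ⟨a, b, e⟩ i hi) =
        (nthEdge (F.map e) i h₂).cast
          ((Gq_vtx ℓ F hF ⟨a, b, e⟩ i hi.le).symm)
          ((Gq_vtx ℓ F hF ⟨a, b, e⟩ (i + 1) hi).symm) from rfl)).trans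
        (Hom.cast_heq _ _ _)).symm))
    exact e2.symm

end Factor

end Construction

end PRA

/-- The free-category monad endofunctor `T₁ = Cat.free ⋙ Quiv.forget` on `Quiv`
is a parametric right adjoint. -/
theorem freeCategoryMonad_isParametricRightAdjoint :
    (Cat.free ⋙ Quiv.forget : Quiv.{u, u} ⥤ Quiv.{u, u}).IsParametricRightAdjoint := by
  show Functor.IsRightAdjoint _
  haveI : ∀ A : Over ((Cat.free ⋙ Quiv.forget : Quiv.{u, u} ⥤ Quiv.{u, u}).obj (⊤_ Quiv.{u, u})),
      HasInitial (StructuredArrow A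
        (Cat.free ⋙ Quiv.forget : Quiv.{u, u} ⥤ Quiv.{u, u}).praComparison) := by
    intro A
    let ℓ : A.left ⟶ (Cat.free ⋙ Quiv.forget).obj (⊤_ Quiv.{u, u}) := A.hom
    let init : StructuredArrow A
        (Cat.free ⋙ Quiv.forget : Quiv.{u, u} ⥤ Quiv.{u, u}).praComparison :=
      StructuredArrow.mk (Y := PRA.LQ ℓ) (Over.homMk (PRA.eta ℓ) (PRA.eta_w ℓ))
    haveI : ∀ B, Nonempty (init ⟶ B) := by
      intro B
      have hF : B.hom.left ≫ (Cat.free ⋙ Quiv.forget).map (terminal.from B.right) = ℓ :=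
        Over.w B.hom
      exact ⟨StructuredArrow.homMk (PRA.G ℓ B.hom.left hF)
        (Over.OverMorphism.ext (PRA.G_fact ℓ B.hom.left hF))⟩
    haveI : ∀ B, Subsingleton (init ⟶ B) := by
      intro B
      constructor
      intro u v
      have hF : B.hom.left ≫ (Cat.free ⋙ Quiv.forget).map (terminal.from B.right) = ℓ :=
        Over.w B.hom
      have hu : PRA.eta ℓ ≫ (Cat.free ⋙ Quiv.forget).map u.right = B.hom.left :=
        congrArg CommaMorphism.left (StructuredArrow.w u)
      have hv : PRA.eta ℓ ≫ (Cat.free ⋙ Quiv.forget).map v.right = B.hom.left :=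
        congrArg CommaMorphism.left (StructuredArrow.w v)
      apply CommaMorphism.ext
      · apply Subsingleton.elim
      · exact (PRA.G_unique ℓ B.hom.left hF u.right hu).trans (PRA.G_unique ℓ B.hom.left hF v.right hv).symm
    exact hasInitial_of_unique init
  exact isRightAdjointOfStructuredArrowInitials _
end

section
/- Let A and B be categories, where A has a terminal object, and let G : A ⥤ B be a parametric right adjoint. Then G preserves limits of every connected shape: for every nonempty connected category J, G preserves limits of shape J. -/
open CategoryTheory CategoryTheory.Limits

/-- The forgetful functor `Over B ⥤ C` preserves limits of connected shape. -/
noncomputable instance overForgetPreservesConnected {C : Type*} [Category C] {B : C}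
    (J : Type*) [Category J] [IsConnected J] :
    PreservesLimitsOfShape J (Over.forget B) where
  preservesLimit {F} := ⟨fun {c} hc => ⟨by
    refine IsLimit.mk (fun s => (hc.lift (CostructuredArrow.CreatesConnected.raiseCone (K := 𝟭 C) s)).left) ?_ ?_
    · intro s j
      exact congrArg CommaMorphism.left (hc.fac (CostructuredArrow.CreatesConnected.raiseCone (K := 𝟭 C) s) j)
    · intro s m hm
      let j0 := Classical.arbitrary J
      have hw : m ≫ c.pt.hom =
          s.π.app j0 ≫ (F.obj j0).hom := by
        erw [show c.pt.hom = (c.π.app j0).left ≫ (F.obj j0).hom from (Over.w (c.π.app j0)).symm,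
          ← Category.assoc, show m ≫ (c.π.app j0).left = s.π.app j0 from hm j0]
        rfl
      have := hc.uniq (CostructuredArrow.CreatesConnected.raiseCone (K := 𝟭 C) s)
        (Over.homMk m hw) (fun j => by
          ext
          exact hm j)
      exact congrArg CommaMorphism.left this⟩⟩

/-- A parametric right adjoint preserves limits of every (nonempty) connected shape. -/
theorem preservesLimitsOfShape_of_isParametricRightAdjoint {A : Type*} [Category A]
    {B : Type*} [Category B] [HasTerminal A] (G : A ⥤ B)
    (hG : G.IsParametricRightAdjoint) (J : Type*) [Category J] [IsConnected J] :
    PreservesLimitsOfShape J G := by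
  haveI : G.praComparison.IsRightAdjoint := hG
  haveI : PreservesLimitsOfShape J G.praComparison :=
    ((Adjunction.ofIsRightAdjoint
      G.praComparison).rightAdjoint_preservesLimits).preservesLimitsOfShape
  exact preservesLimitsOfShape_of_natIso
    (F := G.praComparison ⋙ Over.forget _)
    (NatIso.ofComponents (fun X => Iso.refl _) (by intros; simp [Functor.praComparison]))
end

section
/- Let C be a small category. A functor G : (C ⥤ Type) ⥤ Type is a parametric right adjoint if and only if it is a coproduct of corepresentable functors: there exist a type I and a family of objects P : I → (C ⥤ Type) such that G is isomorphic to the coproduct, indexed by I, of the functors Hom(P i, −) : (C ⥤ Type) ⥤ Type (equivalently, G is isomorphic to the functor X ↦ Σ (i : I), (P i ⟶ X)). -/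
open CategoryTheory CategoryTheory.Limits

/-- The coproduct, indexed by `i : I`, of the corepresentable functors `Hom(P i, −)`;
explicitly it sends `X` to `Σ (i : I), (P i ⟶ X)`. -/
def coproductOfCorepresentables {C : Type} [SmallCategory C] {I : Type}
    (P : I → (C ⥤ Type)) : (C ⥤ Type) ⥤ Type where
  obj X := Σ i : I, (P i ⟶ X)
  map f := TypeCat.ofHom (fun p => ⟨p.1, p.2 ≫ f⟩)
  map_id X := by ext ⟨i, g⟩ : 3; simp
  map_comp f g := by ext ⟨i, h⟩ : 3; simp

/-- Transfer of being a parametric right adjoint along a natural isomorphism. -/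
lemma pra_of_iso {A : Type*} [Category A] {B : Type*} [Category B] [HasTerminal A]
    {G G' : A ⥤ B} (e : G ≅ G') (h : G'.IsParametricRightAdjoint) :
    G.IsParametricRightAdjoint := by
  haveI : (Over.map (e.inv.app (⊤_ A))).IsEquivalence :=
    inferInstanceAs (Over.mapIso (e.symm.app (⊤_ A))).functor.IsEquivalence
  haveI : G'.praComparison.IsRightAdjoint := h
  have iso : G'.praComparison ⋙ Over.map (e.inv.app (⊤_ A)) ≅ G.praComparison := by
    refine NatIso.ofComponents (fun X => Over.isoMk ((e.app X).symm) ?_) ?_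
    · simp [Functor.praComparison]
    · intro X Y f
      ext
      show G'.map f ≫ (e.app Y).symm.hom = (e.app X).symm.hom ≫ G.map f
      simp
  exact CategoryTheory.Functor.isRightAdjoint_of_iso iso

section

variable {C : Type} [SmallCategory C]

lemma sigma_eq_aux {I : Type} {P : I → (C ⥤ Type)} {X : C ⥤ Type}
    (p : Σ i : I, (P i ⟶ X)) (j : I) (h : p.1 = j) :
    (⟨j, eqToHom (congrArg P h).symm ≫ p.2⟩ : Σ i : I, (P i ⟶ X)) = p := by
  obtain ⟨i, f⟩ := p
  dsimp at h ⊢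
  subst h
  simp

lemma T_ext {I : Type} {P : I → (C ⥤ Type)}
    (p q : Σ i : I, (P i ⟶ (⊤_ (C ⥤ Type)))) (h : p.1 = q.1) : p = q := by
  obtain ⟨i, f⟩ := p
  obtain ⟨j, g⟩ := q
  dsimp at h
  subst h
  rw [terminal.hom_ext f g]

/-- A coproduct of corepresentables is a parametric right adjoint. -/
lemma coprod_is_pra {I : Type} (P : I → (C ⥤ Type)) :
    (coproductOfCorepresentables P).IsParametricRightAdjoint := by
  set G := coproductOfCorepresentables P with hG
  let fst : ∀ {X : C ⥤ Type}, G.obj X → I := fun {X} p => (p : Σ i : I, (P i ⟶ X)).1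
  let snd : ∀ {X : C ⥤ Type} (p : G.obj X), P (fst p) ⟶ X := fun {X} p => (p : Σ i : I, (P i ⟶ X)).2
  let e : ∀ (A : Over (G.obj (⊤_ (C ⥤ Type)))) (X : C ⥤ Type),
      ((∐ fun s : A.left => P (fst (A.hom s))) ⟶ X) ≃ (A ⟶ G.praComparison.obj X) :=
    fun A X =>
    { toFun := fun g => Over.homMk (TypeCat.ofHom fun s => (⟨fst (A.hom s), Sigma.ι (fun s : A.left => P (fst (A.hom s))) s ≫ g⟩ : Σ i : I, (P i ⟶ X)))
        (by ext s; exact T_ext _ _ rfl)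
      invFun := fun u => Sigma.desc fun s =>
        eqToHom (congrArg P (congrArg fst (ConcreteCategory.congr_hom (Over.w u) s))).symm ≫ snd (u.left s)
      left_inv := by
        intro g
        apply Sigma.hom_ext
        intro s
        simp [fst, snd]
        rfl
      right_inv := by
        intro u
        ext : 1
        ext s
        refine Eq.trans (congrArg (Sigma.mk (β := fun i => P i ⟶ X) (fst (A.hom s))) (Sigma.ι_desc _ _)) ?_
        exact sigma_eq_aux (u.left s) (fst (A.hom s))
          (congrArg fst (ConcreteCategory.congr_hom (Over.w u) s))
      }
  have he : ∀ A X X' (g : X ⟶ X') (h : _ ⟶ X),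
      e A X' (h ≫ g) = e A X h ≫ G.praComparison.map g := by
    intro A X X' g h
    ext : 1
    ext s
    dsimp [e, Functor.praComparison]
    exact congrArg (Sigma.mk _) (Category.assoc _ _ _).symm
  exact ⟨⟨_, ⟨Adjunction.adjunctionOfEquivLeft e he⟩⟩⟩

end

/-- A `Type`-valued functor on a presheaf category is a parametric right adjoint if and only
if it is a coproduct of corepresentable functors. -/
theorem isParametricRightAdjoint_iff_coproduct_of_corepresentables {C : Type}
    [SmallCategory C] (G : (C ⥤ Type) ⥤ Type) :
    G.IsParametricRightAdjoint ↔
      ∃ (I : Type) (P : I → (C ⥤ Type)), Nonempty (G ≅ coproductOfCorepresentables P) := by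
  constructor
  · intro h
    haveI : G.praComparison.IsRightAdjoint := h
    let adj : G.praComparison.leftAdjoint ⊣ G.praComparison :=
      Adjunction.ofIsRightAdjoint G.praComparison
    set T := G.obj (⊤_ (C ⥤ Type)) with hT
    let pt : T → Over T := fun i => Over.mk (Y := PUnit) (TypeCat.ofHom fun _ => i)
    let P : T → (C ⥤ Type) := fun i => G.praComparison.leftAdjoint.obj (pt i)
    refine ⟨T, P, ⟨?_⟩⟩
    let ψ : ∀ X : C ⥤ Type, (Σ i : T, (P i ⟶ X)) → G.obj X :=
      fun X p => ((adj.homEquiv (pt p.1) X) p.2).left PUnit.unit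
    have hinj : ∀ X, Function.Injective (ψ X) := by
      intro X
      rintro ⟨i, g⟩ ⟨j, h⟩ hy
      dsimp [ψ] at hy
      have hi : i = j := by
        have h1 : G.map (terminal.from X) (((adj.homEquiv (pt i) X) g).left PUnit.unit) = i :=
          ConcreteCategory.congr_hom (Over.w ((adj.homEquiv (pt i) X) g)) PUnit.unit
        have h2 : G.map (terminal.from X) (((adj.homEquiv (pt j) X) h).left PUnit.unit) = j :=
          ConcreteCategory.congr_hom (Over.w ((adj.homEquiv (pt j) X) h)) PUnit.unit
        rw [← h1, ← h2, hy]
      subst hi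
      refine congrArg (Sigma.mk i) ((adj.homEquiv (pt i) X).injective ?_)
      exact Over.OverMorphism.ext (ConcreteCategory.hom_ext _ _ fun u => by cases u; exact hy)
    have hsurj : ∀ X, Function.Surjective (ψ X) := by
      intro X x
      refine ⟨⟨G.map (terminal.from X) x,
        (adj.homEquiv _ X).symm (Over.homMk (TypeCat.ofHom fun _ => x) rfl)⟩, ?_⟩
      dsimp [ψ]
      rw [Equiv.apply_symm_apply]
      rfl
    let equiv : ∀ X : C ⥤ Type, (Σ i : T, (P i ⟶ X)) ≃ G.obj X := fun X =>
      Equiv.ofBijective (ψ X) ⟨hinj X, hsurj X⟩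
    refine (NatIso.ofComponents (fun X => (equiv X).toIso) ?_).symm
    intro X Y k
    ext p
    obtain ⟨i, g⟩ := p
    show ψ Y ((coproductOfCorepresentables P).map k ⟨i, g⟩) = G.map k (ψ X ⟨i, g⟩)
    show ((adj.homEquiv (pt i) Y) (g ≫ k)).left PUnit.unit = G.map k (((adj.homEquiv (pt i) X) g).left PUnit.unit)
    rw [Adjunction.homEquiv_naturality_right]
    simp [Functor.praComparison]
    rfl
  · rintro ⟨I, P, ⟨e⟩⟩
    exact pra_of_iso e (coprod_is_pra P)
end

section
/- Let A, B, E be categories such that A and B have terminal objects, and let F : A ⥤ B and G : B ⥤ E be parametric right adjoints. Then the composite F ⋙ G : A ⥤ E is a parametric right adjoint. -/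
open CategoryTheory CategoryTheory.Limits

/-- The slice adjunction induced by an adjunction. -/
@[simps]
noncomputable def Over.postLeft {C D : Type*} [Category C] [Category D] {L : C ⥤ D} {R : D ⥤ C}
    (adj : L ⊣ R) (Y : D) : Over (R.obj Y) ⥤ Over Y where
  obj W := Over.mk (L.map W.hom ≫ adj.counit.app Y)
  map {W W'} f := Over.homMk (L.map f.left) (by
    dsimp
    rw [← Category.assoc, ← L.map_comp, Over.w])

noncomputable def Over.postAdjunction {C D : Type*} [Category C] [Category D] {L : C ⥤ D}
    {R : D ⥤ C} (adj : L ⊣ R) (Y : D) : Over.postLeft adj Y ⊣ Over.post R :=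
  Adjunction.mkOfHomEquiv
  { homEquiv := fun W Z =>
      { toFun := fun f => Over.homMk (adj.homEquiv _ _ f.left) (by
          dsimp [Adjunction.homEquiv]
          erw [Category.assoc, ← R.map_comp, Over.w f]
          show _ ≫ R.map (L.map W.hom ≫ adj.counit.app Y) = _
          rw [R.map_comp, ← Category.assoc, adj.unit_naturality, Category.assoc,
            adj.right_triangle_components, Category.comp_id])
        invFun := fun g => Over.homMk ((adj.homEquiv _ _).symm g.left) (by
          dsimp [Adjunction.homEquiv]
          erw [Category.assoc]
          erw [← adj.counit_naturality Z.hom]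
          erw [← Category.assoc, ← L.map_comp]
          exact congrArg (fun h => L.map h ≫ adj.counit.app Y) (Over.w g))
        left_inv := fun f => by ext; exact (adj.homEquiv _ _).symm_apply_apply _
        right_inv := fun g => by ext; exact (adj.homEquiv _ _).apply_symm_apply _ }
    homEquiv_naturality_left_symm := fun f g => by ext; exact adj.homEquiv_naturality_left_symm f.left g.left
    homEquiv_naturality_right := fun f g => by ext; exact adj.homEquiv_naturality_right f.left g.left }

instance {C D : Type*} [Category C] [Category D] (R : D ⥤ C) [R.IsRightAdjoint] (Y : D) :
    (Over.post R (X := Y)).IsRightAdjoint :=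
  ⟨_, ⟨Over.postAdjunction (Adjunction.ofIsRightAdjoint R) Y⟩⟩

/-- The composite of two parametric right adjoints is a parametric right adjoint. -/
theorem isParametricRightAdjoint_comp {A : Type*} [Category A] {B : Type*} [Category B]
    {E : Type*} [Category E] [HasTerminal A] [HasTerminal B] (F : A ⥤ B) (G : B ⥤ E)
    (hF : F.IsParametricRightAdjoint) (hG : G.IsParametricRightAdjoint) :
    (F ⋙ G).IsParametricRightAdjoint := by
  unfold Functor.IsParametricRightAdjoint at *
  let Y := F.obj (⊤_ A)
  let H : Over Y ⥤ Over (G.obj Y) :=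
    Over.post G.praComparison ⋙ (Over.iteratedSliceEquiv (G.praComparison.obj Y)).functor
  have : (Over.post G.praComparison (X := Y)).IsRightAdjoint := by
    have := hG
    infer_instance
  have hH : H.IsRightAdjoint := by
    have := hF
    have := (Over.iteratedSliceEquiv (G.praComparison.obj Y)).isRightAdjoint_functor
    exact @Functor.isRightAdjoint_comp _ _ _ _ _ _ _ _ ‹_› this
  have e : F.praComparison ⋙ H ≅ (F ⋙ G).praComparison :=
    NatIso.ofComponents (fun X => Over.isoMk (Iso.refl _) (by
      simp [H, Functor.praComparison, Y, ← G.map_comp]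
      exact Category.id_comp _))
      (fun f => by ext; simp [H, Functor.praComparison]; exact (Category.comp_id _).trans (Category.id_comp _).symm)
  have := hF
  exact Functor.isRightAdjoint_of_iso e
end

section
/- Let A and B be categories where A has a terminal object, and let G : A ⥤ B be a functor. Then G is a parametric right adjoint if and only if for every object a of A the induced functor on slice categories Over a ⥤ Over (G.obj a) — sending an object u : x ⟶ a of Over a to G.map u : G.obj x ⟶ G.obj a, with the evident action on morphisms — has a left adjoint. -/
open CategoryTheory CategoryTheory.Limits

noncomputable section AuxPRA

variable {A : Type*} [Category A] {B : Type*} [Category B]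

/-- If `G` has a left adjoint `F`, then `Over.post G : Over a ⥤ Over (G.obj a)` has a left
adjoint, namely `Over.post F ⋙ Over.map (counit.app a)`. -/
def Aux.postAdj {F : B ⥤ A} {G : A ⥤ B} (adj : F ⊣ G) (a : A) :
    (Over.post (X := G.obj a) F ⋙ Over.map (adj.counit.app a)) ⊣ Over.post (X := a) G :=
  Adjunction.mkOfHomEquiv
  { homEquiv := fun y x =>
      { toFun := fun k => Over.homMk (adj.homEquiv _ _ k.left) (by
          have w := Over.w k
          dsimp at w ⊢
          erw [Adjunction.homEquiv_unit, Category.assoc, ← G.map_comp, w, G.map_comp,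
            ← Category.assoc]
          show (adj.unit.app y.left ≫ G.map (F.map y.hom)) ≫ G.map (adj.counit.app a) = y.hom
          erw [adj.unit_naturality, Category.assoc, adj.right_triangle_components, Category.comp_id])
        invFun := fun k => Over.homMk ((adj.homEquiv _ _).symm k.left) (by
          have w := Over.w k
          dsimp at w ⊢
          have h := adj.counit.naturality x.hom
          dsimp at h
          erw [Adjunction.homEquiv_counit, Category.assoc, ← h, ← Category.assoc,
            ← F.map_comp, w]
          rfl)
        left_inv := fun k => by ext; exact (adj.homEquiv _ _).left_inv _
        right_inv := fun k => by ext; exact (adj.homEquiv _ _).right_inv _ }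
    homEquiv_naturality_left_symm := fun f g => by
      ext
      exact adj.homEquiv_naturality_left_symm _ _
    homEquiv_naturality_right := fun f g => by
      ext
      exact adj.homEquiv_naturality_right _ _ }

/-- The canonical functor `A ⥤ Over (⊤_ A)`. -/
def Aux.toOverTerminal [HasTerminal A] : A ⥤ Over (⊤_ A) where
  obj X := Over.mk (terminal.from X)
  map f := Over.homMk f

/-- The equivalence `A ≌ Over (⊤_ A)`. -/
def Aux.equivOverTerminal [HasTerminal A] : A ≌ Over (⊤_ A) where
  functor := Aux.toOverTerminal
  inverse := Over.forget _
  unitIso := Iso.refl _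
  counitIso := NatIso.ofComponents (fun y => Over.isoMk (Iso.refl _)) (by
    intros X Y f
    ext
    simp [Aux.toOverTerminal])
  functor_unitIso_comp := fun X => by ext; exact Category.id_comp (𝟙 X)

end AuxPRA

/-- A functor `G : A ⥤ B` is a parametric right adjoint if and only if, for every object
`a : A`, the induced functor `Over a ⥤ Over (G.obj a)` (Mathlib's `Over.post G`, sending
`u : x ⟶ a` to `G.map u : G.obj x ⟶ G.obj a`) has a left adjoint. -/
theorem isParametricRightAdjoint_iff_over_post_isRightAdjoint {A : Type*} [Category A]
    {B : Type*} [Category B] [HasTerminal A] (G : A ⥤ B) :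
    G.IsParametricRightAdjoint ↔
      ∀ a : A, (Over.post (X := a) G).IsRightAdjoint := by
  constructor
  · intro h a
    haveI h0 : G.praComparison.IsRightAdjoint := h
    have adj := Adjunction.ofIsRightAdjoint G.praComparison
    haveI h1 : (Over.post (X := a) G.praComparison).IsRightAdjoint :=
      (Aux.postAdj adj a).isRightAdjoint
    haveI h1' : (Over.iteratedSliceForward (G.praComparison.obj a)).IsRightAdjoint :=
      (Over.iteratedSliceEquiv _).isRightAdjoint_functor
    haveI h2 : (Over.post (X := a) G.praComparison ⋙
        Over.iteratedSliceForward (G.praComparison.obj a)).IsRightAdjoint :=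
      inferInstance
    have e : Over.post (X := a) G.praComparison ⋙
        Over.iteratedSliceForward (G.praComparison.obj a) ≅ Over.post (X := a) G :=
      NatIso.ofComponents (fun x => Over.isoMk (Iso.refl _) (Category.id_comp _)) (by
        intros x y f
        ext
        exact (Category.comp_id (G.map f.left)).trans (Category.id_comp (G.map f.left)).symm)
    exact @Functor.isRightAdjoint_of_iso _ _ _ _ _ _ e h2
  · intro h
    haveI : (Aux.toOverTerminal (A := A)).IsRightAdjoint :=
      Aux.equivOverTerminal.isRightAdjoint_functor
    haveI h2 := h (⊤_ A)
    haveI h1 : (Aux.toOverTerminal ⋙ Over.post (X := ⊤_ A) G).IsRightAdjoint :=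
      inferInstance
    have e : Aux.toOverTerminal ⋙ Over.post (X := ⊤_ A) G ≅ G.praComparison :=
      NatIso.ofComponents (fun x => Over.isoMk (Iso.refl _) (Category.id_comp _)) (by
        intros x y f
        ext
        exact (Category.comp_id (G.map f)).trans (Category.id_comp (G.map f)).symm)
    exact Functor.isRightAdjoint_of_iso e
end

section
/- Let paral denote the quiver with two vertices s and t and exactly two arrows, both from s to t, and let T₁ := Cat.free ⋙ Quiv.forget be the free-category monad endofunctor on Quiv. Let P₂ : Quiv ⥤ Type be the functor sending a quiver X to the set of quiver morphisms (prefunctors) paral ⟶ T₁.obj X, i.e., the set of parallel pairs of paths in X. Then the comma category of Type over P₂ — the category whose objects are triples consisting of a type S, a quiver X, and a function S → P₂.obj X, with the evident morphisms (this is the category of 2-computads) — is a presheaf category: it is equivalent to a functor category E ⥤ Type for some small category E. -/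
open CategoryTheory CategoryTheory.Limits

universe u

/-- The vertices `s` and `t` of the quiver `paral`. -/
inductive ParalVertex : Type u | s | t

/-- The arrows of the quiver `paral`: exactly two arrows, both from `s` to `t`. -/
inductive ParalArrow : ParalVertex.{u} → ParalVertex.{u} → Type u
  | a : ParalArrow .s .t
  | b : ParalArrow .s .t

instance : Quiver.{u} ParalVertex.{u} := ⟨ParalArrow⟩

/-- The quiver with two vertices `s`, `t` and exactly two arrows, both from `s` to `t`. -/
def paral : Quiv.{u, u} := Quiv.of ParalVertex.{u}

/-- The functor sending a quiver `X` to the set of quiver morphisms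
`paral ⟶ T₁.obj X`, where `T₁ := Cat.free ⋙ Quiv.forget` is the free-category monad
endofunctor; i.e. the set of parallel pairs of paths in `X`. -/
def parallelPairsOfPaths : Quiv.{u, u} ⥤ Type u :=
  (Cat.free ⋙ Quiv.forget) ⋙ coyoneda.obj (Opposite.op paral.{u})





namespace Schanuel
open Quiver

variable {X : Type*} [Quiver.{u} X]

/-- The `k`-th vertex of a path (its endpoint if `k` is out of range). -/
def nthVert {a : X} : ∀ {b : X}, Path a b → ℕ → X
  | _, .nil, _ => a
  | b, .cons p _, k => if k ≤ p.length then nthVert p k else b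

lemma nthVert_zero {a b : X} (p : Path a b) : nthVert p 0 = a := by
  induction p with
  | nil => rfl
  | cons p f ih => rw [nthVert, if_pos (Nat.zero_le _), ih]

lemma nthVert_of_ge {a b : X} (p : Path a b) {k : ℕ} (h : p.length ≤ k) : nthVert p k = b := by
  induction p with
  | nil => rfl
  | cons p f ih =>
      rw [Quiver.Path.length_cons] at h
      rw [nthVert, if_neg (by omega)]

/-- The `k`-th edge of a path, as an element of the total edge type. -/
def nthEdge {a : X} : ∀ {b : X} (p : Path a b) (k : ℕ), k < p.length → Σ x y : X, x ⟶ y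
  | _, .nil, _, h => absurd h (Nat.not_lt_zero _)
  | _, .cons p f, k, h =>
      if h' : k < p.length then nthEdge p k h' else ⟨_, _, f⟩

lemma nthEdge_fst {a : X} : ∀ {b : X} (p : Path a b) (k : ℕ) (h : k < p.length),
    (nthEdge p k h).1 = nthVert p k
  | _, .nil, _, h => absurd h (Nat.not_lt_zero _)
  | _, .cons p f, k, h => by
      rw [nthEdge, nthVert]
      by_cases h' : k < p.length
      · rw [dif_pos h', if_pos (Nat.le_of_lt h'), nthEdge_fst]
      · have hk : k = p.length := by
          have := Quiver.Path.length_cons _ _ _ p f ▸ h; omega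
        rw [dif_neg h', if_pos (le_of_eq hk), hk, nthVert_of_ge p le_rfl]

lemma nthEdge_snd {a : X} : ∀ {b : X} (p : Path a b) (k : ℕ) (h : k < p.length),
    (nthEdge p k h).2.1 = nthVert p (k + 1)
  | _, .nil, _, h => absurd h (Nat.not_lt_zero _)
  | _, .cons p f, k, h => by
      rw [nthEdge, nthVert]
      by_cases h' : k < p.length
      · rw [dif_pos h', if_pos (by omega : k + 1 ≤ p.length), nthEdge_snd]
      · have hk : k = p.length := by
          have := Quiver.Path.length_cons _ _ _ p f ▸ h; omega
        rw [dif_neg h', if_neg (by omega)]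

lemma length_mapPath {Y : Type*} [Quiver.{u} Y] (F : Prefunctor X Y) {a b : X} (p : Path a b) :
    (F.mapPath p).length = p.length := by
  induction p with
  | nil => rfl
  | cons p f ih => simp [Prefunctor.mapPath_cons, ih]

lemma nthVert_mapPath {Y : Type*} [Quiver.{u} Y] (F : Prefunctor X Y) {a b : X} (p : Path a b)
    (k : ℕ) : nthVert (F.mapPath p) k = F.obj (nthVert p k) := by
  induction p with
  | nil => rfl
  | cons p f ih =>
      rw [Prefunctor.mapPath_cons, nthVert, nthVert, length_mapPath]
      by_cases h : k ≤ p.length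
      · rw [if_pos h, if_pos h, ih]
      · rw [if_neg h, if_neg h]

/-- Mapping the total edge of a quiver. -/
def mapTot {Y : Type*} [Quiver.{u} Y] (F : Prefunctor X Y) (e : Σ x y : X, x ⟶ y) :
    Σ x y : Y, x ⟶ y := ⟨F.obj e.1, F.obj e.2.1, F.map e.2.2⟩

lemma nthEdge_mapPath {Y : Type*} [Quiver.{u} Y] (F : Prefunctor X Y) {a b : X} (p : Path a b)
    (k : ℕ) (h : k < p.length) (h' : k < (F.mapPath p).length) :
    nthEdge (F.mapPath p) k h' = mapTot F (nthEdge p k h) := by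
  induction p with
  | nil => exact absurd h (Nat.not_lt_zero _)
  | cons p f ih =>
      simp only [Prefunctor.mapPath_cons, nthEdge]
      by_cases hk : k < p.length
      · rw [dif_pos hk, dif_pos (by rwa [length_mapPath] : k < (F.mapPath p).length), ih]
      · rw [dif_neg hk, dif_neg (by rwa [length_mapPath] : ¬ k < (F.mapPath p).length)]; rfl

/-- An "edge structure": a type of vertices and a type of edges with source/target maps. -/
structure EdgeStr : Type (u + 1) where
  V : Type u
  E : Type u
  s : E → V
  t : E → V

instance (G : EdgeStr.{u}) : Quiver.{u, u} G.V :=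
  ⟨fun a b => { e : G.E // G.s e = a ∧ G.t e = b }⟩

/-- Build a path in an edge-structured quiver from vertex and edge sequences. -/
def EdgeStr.path (G : EdgeStr.{u}) :
    ∀ (m : ℕ) (v : Fin (m + 1) → G.V) (e : Fin m → G.E),
      (∀ i, G.s (e i) = v i.castSucc) → (∀ i, G.t (e i) = v i.succ) →
      Path (v 0) (v (Fin.last m))
  | 0, _, _, _, _ => .nil
  | m + 1, v, e, hs, ht =>
      (EdgeStr.path G m (fun i => v i.castSucc) (fun i => e i.castSucc)
          (fun i => hs i.castSucc) (fun i => ht i.castSucc)).cons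
        ⟨e (Fin.last m), hs (Fin.last m), ht (Fin.last m)⟩

lemma EdgeStr.length_path (G : EdgeStr.{u}) :
    ∀ (m : ℕ) (v : Fin (m + 1) → G.V) (e : Fin m → G.E) hs ht,
      (G.path m v e hs ht).length = m
  | 0, _, _, _, _ => rfl
  | m + 1, v, e, hs, ht => by
      erw [EdgeStr.path, Path.length_cons, EdgeStr.length_path]

lemma EdgeStr.nthVert_path (G : EdgeStr.{u}) :
    ∀ (m : ℕ) (v : Fin (m + 1) → G.V) (e : Fin m → G.E) hs ht (k : Fin (m + 1)),
      nthVert (G.path m v e hs ht) k.val = v k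
  | 0, v, _, _, _, k => by
      have : k = 0 := by apply Fin.ext; omega
      subst this; rfl
  | m + 1, v, e, hs, ht, k => by
      erw [EdgeStr.path, nthVert, EdgeStr.length_path]
      rcases Fin.eq_castSucc_or_eq_last k with ⟨j, rfl⟩ | rfl
      · rw [if_pos (by simp only [Fin.coe_castSucc]; omega : (j.castSucc).val ≤ m)]
        exact EdgeStr.nthVert_path G m _ _ _ _ j
      · rw [if_neg (by simp [Fin.last])]

lemma EdgeStr.nthEdge_path (G : EdgeStr.{u}) :
    ∀ (m : ℕ) (v : Fin (m + 1) → G.V) (e : Fin m → G.E) hs ht (k : Fin m)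
      (h : k.val < (G.path m v e hs ht).length),
      nthEdge (G.path m v e hs ht) k.val h =
        ⟨v k.castSucc, v k.succ, ⟨e k, hs k, ht k⟩⟩
  | 0, _, _, _, _, k, _ => k.elim0
  | m + 1, v, e, hs, ht, k, h => by
      simp only [EdgeStr.path, nthEdge]
      by_cases hk : k.val < m
      · rw [dif_pos (by erw [EdgeStr.length_path]; exact hk)]
        exact EdgeStr.nthEdge_path G m _ _ _ _ ⟨k.val, hk⟩ _
      · have : k = Fin.last m := by
          apply Fin.ext; have := k.isLt; simp only [Fin.last]; omega
        subst this
        rw [dif_neg (by erw [EdgeStr.length_path]; omega)]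
        rfl

lemma cons_heq {V : Type*} [Quiver.{u} V] {a a' b b' c c' : V}
    (ha : a = a') (hb : b = b') (hc : c = c')
    {P : Path a b} {P' : Path a' b'} {g : b ⟶ c} {g' : b' ⟶ c'}
    (hP : HEq P P') (hg : HEq g g') : HEq (P.cons g) (P'.cons g') := by
  subst ha; subst hb; subst hc; cases hP; cases hg; rfl

lemma EdgeStr.hom_heq (G : EdgeStr.{u}) {x x' y y' : G.V} (h1 : x = x') (h2 : y = y')
    {e : x ⟶ y} {e' : x' ⟶ y'} (h : e.val = e'.val) : HEq e e' := by
  subst h1; subst h2; exact heq_of_eq (Subtype.ext h)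

lemma prefunctor_ext_heq {V W : Type*} [Quiver.{u} V] [Quiver.{u} W]
    {F G : Prefunctor V W} (hobj : ∀ x, F.obj x = G.obj x)
    (hmap : ∀ (x y : V) (f : x ⟶ y), HEq (F.map f) (G.map f)) : F = G := by
  obtain ⟨Fo, Fm⟩ := F
  obtain ⟨Go, Gm⟩ := G
  obtain rfl : Fo = Go := funext hobj
  obtain rfl : @Fm = @Gm := by
    funext x y f
    exact eq_of_heq (hmap x y f)
  rfl

/-- The total edge structure of a quiver. -/
def totStr (X : Type u) [Quiver.{u} X] : EdgeStr.{u} :=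
  ⟨X, Σ x y : X, x ⟶ y, fun e => e.1, fun e => e.2.1⟩

/-- The canonical prefunctor from a quiver to its total edge structure quiver. -/
def toTot (X : Type u) [Quiver.{u} X] : Prefunctor X (totStr X).V where
  obj := fun x => x
  map := fun {a b} f => ⟨⟨a, b, f⟩, rfl, rfl⟩

lemma recon {X : Type u} [Quiver.{u} X] {a b : X} (p : Path a b)
    (v : Fin (p.length + 1) → (totStr X).V) (e : Fin p.length → (totStr X).E)
    (hv : ∀ i, v i = nthVert p i.val) (he : ∀ i : Fin p.length, e i = nthEdge p i.val i.isLt)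
    (hs : ∀ i, (totStr X).s (e i) = v i.castSucc) (ht : ∀ i, (totStr X).t (e i) = v i.succ) :
    HEq ((totStr X).path p.length v e hs ht) ((toTot X).mapPath p) := by
  induction p with
  | nil =>
      have h1 : v = fun i => nthVert (Path.nil : Path a a) i.val := funext hv
      subst h1
      exact HEq.rfl
  | @cons b' c' p f ih =>
      have hv' : ∀ i : Fin (p.length + 1), v i.castSucc = nthVert p i.val := by
        intro i
        rw [hv i.castSucc]
        show nthVert (p.cons f) i.castSucc.val = nthVert p i.val
        rw [nthVert, if_pos (show i.castSucc.val ≤ p.length by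
          simpa using Nat.lt_succ_iff.mp i.isLt)]
        rfl
      have he' : ∀ i : Fin p.length, e i.castSucc = nthEdge p i.val i.isLt := by
        intro i
        rw [he i.castSucc]
        show nthEdge (p.cons f) i.castSucc.val _ = nthEdge p i.val i.isLt
        simp only [nthEdge]
        rw [dif_pos (show i.castSucc.val < p.length from i.isLt)]
        rfl
      have hb' : v (Fin.last p.length).castSucc = b' := by
        erw [hv]
        show nthVert (p.cons f) (Fin.last p.length).castSucc.val = b'
        rw [nthVert, if_pos (by simp), nthVert_of_ge p (by simp)]
      have hc' : v (Fin.last (p.length + 1)) = c' := by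
        erw [hv]
        show nthVert (p.cons f) (Fin.last (p.length + 1)).val = c'
        rw [nthVert, if_neg (by simp [Fin.last])]
      have hlaste : e (Fin.last p.length) = (⟨⟨b', c', f⟩, rfl, rfl⟩ :
          { ed : (totStr X).E // (totStr X).s ed = b' ∧ (totStr X).t ed = c' }).val := by
        erw [he]
        show nthEdge (p.cons f) (Fin.last p.length).val _ = _
        simp only [nthEdge]
        rw [dif_neg (by simp [Fin.last])]
      refine cons_heq ?_ ?_ ?_ ?_ ?_
      · show v 0 = (toTot X).obj a
        rw [hv 0]
        show nthVert (p.cons f) (0 : ℕ) = a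
        rw [nthVert_zero]
      · exact hb'
      · exact hc'
      · exact ih (fun i => v i.castSucc) (fun i => e i.castSucc) hv' he' _ _
      · exact (totStr X).hom_heq hb' hc' hlaste
/-- Identification relation on the boundary vertices of a generic `(m,n)`-cell:
the two paths share source and target. -/
def GRel (m n : ℕ) : (Fin (m + 1) ⊕ Fin (n + 1)) → (Fin (m + 1) ⊕ Fin (n + 1)) → Prop :=
  fun x y => (x = .inl 0 ∧ y = .inr 0) ∨ (x = .inl (Fin.last m) ∧ y = .inr (Fin.last n))

/-- The vertices of a generic `(m,n)`-cell. -/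
def GVert (m n : ℕ) : Type := Quot (GRel m n)

/-- The source vertex of an edge of a generic `(m,n)`-cell. -/
def esrc {m n : ℕ} : Fin m ⊕ Fin n → GVert m n
  | .inl i => Quot.mk _ (.inl i.castSucc)
  | .inr j => Quot.mk _ (.inr j.castSucc)

/-- The target vertex of an edge of a generic `(m,n)`-cell. -/
def etgt {m n : ℕ} : Fin m ⊕ Fin n → GVert m n
  | .inl i => Quot.mk _ (.inl i.succ)
  | .inr j => Quot.mk _ (.inr j.succ)

/-- The objects of the indexing category: a vertex object, an arrow object,
and one object for each shape of 2-cell. -/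
inductive EObj : Type u
  | V | A | C (m n : ℕ)

/-- Morphisms of the indexing category. -/
inductive EHom : EObj.{u} → EObj.{u} → Type u
  | id (X : EObj.{u}) : EHom X X
  | src : EHom .A .V
  | tgt : EHom .A .V
  | vert {m n : ℕ} (i : GVert m n) : EHom (.C m n) .V
  | edge {m n : ℕ} (i : Fin m ⊕ Fin n) : EHom (.C m n) .A

/-- Composition of morphisms of the indexing category. -/
def EHom.comp : ∀ {X Y Z : EObj.{u}}, EHom X Y → EHom Y Z → EHom X Z
  | _, _, _, .id _, g => g
  | _, _, _, .src, .id _ => .src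
  | _, _, _, .tgt, .id _ => .tgt
  | _, _, _, .vert i, .id _ => .vert i
  | _, _, _, .edge i, .id _ => .edge i
  | _, _, _, .edge i, .src => .vert (esrc i)
  | _, _, _, .edge i, .tgt => .vert (etgt i)

instance : SmallCategory EObj.{u} where
  Hom := EHom
  id := EHom.id
  comp := EHom.comp
  id_comp := fun _ => rfl
  comp_id := fun f => by cases f <;> rfl
  assoc := fun f g h => by cases f <;> cases g <;> cases h <;> rfl
/-- Auxiliary cast lemmas for paths. -/
lemma length_cast {X : Type u} [Quiver.{u} X] {a a' b b' : X} (h1 : a = a') (h2 : b = b')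
    (p : Path a b) : (p.cast h1 h2).length = p.length := by subst h1; subst h2; rfl

lemma nthVert_cast {X : Type u} [Quiver.{u} X] {a a' b b' : X} (h1 : a = a') (h2 : b = b')
    (p : Path a b) (k : ℕ) : nthVert (p.cast h1 h2) k = nthVert p k := by
  subst h1; subst h2; rfl

lemma nthEdge_cast {X : Type u} [Quiver.{u} X] {a a' b b' : X} (h1 : a = a') (h2 : b = b')
    (p : Path a b) (k : ℕ) (h : k < (p.cast h1 h2).length) (h' : k < p.length) :
    nthEdge (p.cast h1 h2) k h = nthEdge p k h' := by subst h1; subst h2; rfl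

lemma EdgeStr.path_congr (G : EdgeStr.{u}) (m : ℕ) {v v' : Fin (m+1) → G.V}
    {e e' : Fin m → G.E} (hv : v = v') (he : e = e') (hs ht hs' ht') :
    HEq (G.path m v e hs ht) (G.path m v' e' hs' ht') := by subst hv; subst he; rfl

/-- Morphisms of edge structures. -/
structure EMor (G G' : EdgeStr.{u}) where
  fV : G.V → G'.V
  fE : G.E → G'.E
  hs : ∀ e, G'.s (fE e) = fV (G.s e)
  ht : ∀ e, G'.t (fE e) = fV (G.t e)

/-- The prefunctor induced by a morphism of edge structures. -/
def EMor.pre {G G' : EdgeStr.{u}} (μ : EMor G G') : Prefunctor G.V G'.V where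
  obj := μ.fV
  map := fun {a b} e => ⟨μ.fE e.val, by rw [μ.hs, e.prop.1], by rw [μ.ht, e.prop.2]⟩

lemma EMor.mapPath_path {G G' : EdgeStr.{u}} (μ : EMor G G') :
    ∀ (m : ℕ) (v : Fin (m+1) → G.V) (e : Fin m → G.E) (hs) (ht),
      μ.pre.mapPath (G.path m v e hs ht) =
        G'.path m (fun i => μ.fV (v i)) (fun i => μ.fE (e i))
          (fun i => by rw [μ.hs, hs i]) (fun i => by rw [μ.ht, ht i])
  | 0, v, e, hs, ht => rfl
  | m + 1, v, e, hs, ht => by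
      simp only [EdgeStr.path, Prefunctor.mapPath_cons]
      erw [Prefunctor.mapPath_cons, EMor.mapPath_path μ m]
      rfl

/-- The edge structure associated to a presheaf on the indexing category. -/
def str (F : EObj.{u} ⥤ Type u) : EdgeStr.{u} :=
  ⟨F.obj .V, F.obj .A, fun e => F.map EHom.src e, fun e => F.map EHom.tgt e⟩

/-- Vertex of a cell. -/
def vmap (F : EObj.{u} ⥤ Type u) {m n : ℕ} (x : F.obj (.C m n)) (i : GVert m n) :
    (str F).V := F.map (EHom.vert i) x

/-- Edge of a cell. -/
def emap (F : EObj.{u} ⥤ Type u) {m n : ℕ} (x : F.obj (.C m n)) (i : Fin m ⊕ Fin n) :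
    (str F).E := F.map (EHom.edge i) x

lemma emap_s (F : EObj.{u} ⥤ Type u) {m n : ℕ} (x : F.obj (.C m n)) (i : Fin m ⊕ Fin n) :
    (str F).s (emap F x i) = vmap F x (esrc i) :=
  (types_congr_hom (F.map_comp (EHom.edge i) EHom.src) x).symm

lemma emap_t (F : EObj.{u} ⥤ Type u) {m n : ℕ} (x : F.obj (.C m n)) (i : Fin m ⊕ Fin n) :
    (str F).t (emap F x i) = vmap F x (etgt i) :=
  (types_congr_hom (F.map_comp (EHom.edge i) EHom.tgt) x).symm

/-- The first boundary path of a cell. -/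
def pathA (F : EObj.{u} ⥤ Type u) {m n : ℕ} (x : F.obj (.C m n)) :
    Path (vmap F x (Quot.mk _ (.inl 0))) (vmap F x (Quot.mk _ (.inl (Fin.last m)))) :=
  (str F).path m (fun i => vmap F x (Quot.mk _ (.inl i))) (fun i => emap F x (.inl i))
    (fun i => emap_s F x (.inl i)) (fun i => emap_t F x (.inl i))

/-- The second boundary path of a cell. -/
def pathB (F : EObj.{u} ⥤ Type u) {m n : ℕ} (x : F.obj (.C m n)) :
    Path (vmap F x (Quot.mk _ (.inr 0))) (vmap F x (Quot.mk _ (.inr (Fin.last n)))) :=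
  (str F).path n (fun i => vmap F x (Quot.mk _ (.inr i))) (fun i => emap F x (.inr i))
    (fun i => emap_s F x (.inr i)) (fun i => emap_t F x (.inr i))

lemma gv0 {m n : ℕ} : (Quot.mk (GRel m n) (.inr 0)) = Quot.mk (GRel m n) (.inl 0) :=
  (Quot.sound (show GRel m n (.inl 0) (.inr 0) from Or.inl ⟨rfl, rfl⟩)).symm

lemma gvl {m n : ℕ} :
    (Quot.mk (GRel m n) (.inr (Fin.last n))) = Quot.mk (GRel m n) (.inl (Fin.last m)) :=
  (Quot.sound (show GRel m n (.inl (Fin.last m)) (.inr (Fin.last n)) from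
    Or.inr ⟨rfl, rfl⟩)).symm

/-- The pair of parallel paths associated to a cell of a presheaf. -/
def cell2pp (F : EObj.{u} ⥤ Type u) (y : Σ m n : ℕ, F.obj (.C m n)) :
    Prefunctor ParalVertex.{u} (Paths (str F).V) where
  obj := fun z => match z with
    | .s => vmap F y.2.2 (Quot.mk _ (.inl 0))
    | .t => vmap F y.2.2 (Quot.mk _ (.inl (Fin.last y.1)))
  map := fun {z w} ar => match z, w, ar with
    | _, _, .a => pathA F y.2.2
    | _, _, .b => (pathB F y.2.2).cast (congrArg (vmap F y.2.2) gv0) (congrArg (vmap F y.2.2) gvl)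
lemma mapPath_cast {X Y : Type u} [Quiver.{u} X] [Quiver.{u} Y] (F : Prefunctor X Y)
    {a a' b b' : X} (h1 : a = a') (h2 : b = b') (p : Path a b) :
    F.mapPath (p.cast h1 h2) = (F.mapPath p).cast (congrArg F.obj h1) (congrArg F.obj h2) := by
  subst h1; subst h2; rfl

/-- The edge-structure morphism associated to a map of presheaves. -/
def strMor {F F' : EObj.{u} ⥤ Type u} (η : F ⟶ F') : EMor (str F) (str F') where
  fV := fun v => η.app .V v
  fE := fun e => η.app .A e
  hs := fun e => (types_congr_hom (η.naturality EHom.src) e).symm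
  ht := fun e => (types_congr_hom (η.naturality EHom.tgt) e).symm

lemma vmap_nat {F F' : EObj.{u} ⥤ Type u} (η : F ⟶ F') {m n : ℕ} (x : F.obj (.C m n))
    (i : GVert m n) : vmap F' (η.app _ x) i = η.app .V (vmap F x i) :=
  (types_congr_hom (η.naturality (EHom.vert i)) x).symm

lemma emap_nat {F F' : EObj.{u} ⥤ Type u} (η : F ⟶ F') {m n : ℕ} (x : F.obj (.C m n))
    (i : Fin m ⊕ Fin n) : emap F' (η.app _ x) i = η.app .A (emap F x i) :=
  (types_congr_hom (η.naturality (EHom.edge i)) x).symm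

/-- The functor from presheaves on the indexing category to 2-computads. -/
def Psi : (EObj.{u} ⥤ Type u) ⥤ Comma (𝟭 (Type u)) parallelPairsOfPaths.{u} where
  obj F :=
    { left := Σ m n : ℕ, F.obj (.C m n)
      right := Quiv.of (str F).V
      hom := TypeCat.ofHom (cell2pp F) }
  map {F F'} η :=
    { left := TypeCat.ofHom fun y => ⟨y.1, y.2.1, η.app _ y.2.2⟩
      right := (strMor η).pre
      w := by
        ext y
        obtain ⟨m, n, x⟩ := y
        show cell2pp F' ⟨m, n, η.app _ x⟩ = _
        refine prefunctor_ext_heq ?_ ?_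
        · rintro (_ | _)
          · exact (vmap_nat η x _).trans rfl
          · exact (vmap_nat η x _).trans rfl
        · rintro z w (_ | _)
          · show HEq (pathA F' (η.app _ x)) ((strMor η).pre.mapPath (pathA F x))
            erw [pathA, pathA, EMor.mapPath_path]
            exact (str F').path_congr m (funext fun i => vmap_nat η x _)
              (funext fun i => emap_nat η x _) _ _ _ _
          · show HEq ((pathB F' (η.app _ x)).cast _ _)
              ((strMor η).pre.mapPath ((pathB F x).cast _ _))
            erw [mapPath_cast]
            refine HEq.trans (Quiver.Path.cast_heq _ _ _)
              (HEq.trans ?_ (Quiver.Path.cast_heq _ _ _).symm)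
            erw [pathB, pathB, EMor.mapPath_path]
            exact (str F').path_congr n (funext fun i => vmap_nat η x _)
              (funext fun i => emap_nat η x _) _ _ _ _ }
  map_id F := by
    apply CommaMorphism.ext
    · rfl
    · exact prefunctor_ext_heq (fun _ => rfl)
        (fun _ _ e => heq_of_eq (Subtype.ext rfl))
  map_comp {F F' F''} η θ := by
    apply CommaMorphism.ext
    · rfl
    · exact prefunctor_ext_heq (fun _ => rfl)
        (fun _ _ e => heq_of_eq (Subtype.ext rfl))
/-- The first path of a parallel pair. -/
def ppA {X : Quiv.{u,u}} (φ : paral.{u} ⟶ (Cat.free ⋙ Quiv.forget).obj X) :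
    Quiver.Path (V := (X : Type u)) (φ.obj .s) (φ.obj .t) := φ.map ParalArrow.a

/-- The second path of a parallel pair. -/
def ppB {X : Quiv.{u,u}} (φ : paral.{u} ⟶ (Cat.free ⋙ Quiv.forget).obj X) :
    Quiver.Path (V := (X : Type u)) (φ.obj .s) (φ.obj .t) := φ.map ParalArrow.b

lemma ppA_map {X Y : Quiv.{u,u}} (h : X ⟶ Y) (φ : paral.{u} ⟶ (Cat.free ⋙ Quiv.forget).obj X) :
    ppA (parallelPairsOfPaths.map h φ) = h.mapPath (ppA φ) := rfl

lemma ppB_map {X Y : Quiv.{u,u}} (h : X ⟶ Y) (φ : paral.{u} ⟶ (Cat.free ⋙ Quiv.forget).obj X) :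
    ppB (parallelPairsOfPaths.map h φ) = h.mapPath (ppB φ) := rfl

/-- The vertices of a parallel pair of paths, indexed by `GVert`. -/
def vertAt {X : Quiv.{u,u}} (φ : paral.{u} ⟶ (Cat.free ⋙ Quiv.forget).obj X) {m n : ℕ}
    (h : (ppA φ).length = m ∧ (ppB φ).length = n) : GVert m n → X :=
  Quot.lift
    (fun j => match j with
      | .inl i => nthVert (ppA φ) i.val
      | .inr i => nthVert (ppB φ) i.val)
    (by
      rintro x y (⟨rfl, rfl⟩ | ⟨rfl, rfl⟩)
      · show nthVert (ppA φ) 0 = nthVert (ppB φ) 0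
        erw [nthVert_zero, nthVert_zero]
      · show nthVert (ppA φ) m = nthVert (ppB φ) n
        rw [nthVert_of_ge _ (le_of_eq h.1), nthVert_of_ge _ (le_of_eq h.2)])

/-- The object part of `Phi`. -/
def phiObj (c : Comma (𝟭 (Type u)) parallelPairsOfPaths.{u}) : EObj.{u} → Type u
  | .V => c.right
  | .A => Σ a b : (c.right : Type u), a ⟶ b
  | .C m n => { x : c.left // (ppA (c.hom x)).length = m ∧ (ppB (c.hom x)).length = n }

/-- Edge part of the action of `Phi c`. -/
def phiEdge (c : Comma (𝟭 (Type u)) parallelPairsOfPaths.{u}) {m n : ℕ} (i : Fin m ⊕ Fin n)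
    (x : phiObj c (.C m n)) : phiObj c .A :=
  match i with
  | .inl i => nthEdge (ppA (c.hom x.val)) i.val (by rw [x.prop.1]; exact i.isLt)
  | .inr i => nthEdge (ppB (c.hom x.val)) i.val (by rw [x.prop.2]; exact i.isLt)

/-- The action of `Phi c` on morphisms. -/
def phiMap (c : Comma (𝟭 (Type u)) parallelPairsOfPaths.{u}) :
    ∀ {o o' : EObj.{u}}, EHom o o' → phiObj c o → phiObj c o'
  | _, _, .id _ => id
  | _, _, .src => fun e => e.1
  | _, _, .tgt => fun e => e.2.1
  | _, _, .vert i => fun x => vertAt (c.hom x.val) x.prop i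
  | _, _, .edge i => phiEdge c i

/-- The presheaf associated to a 2-computad. -/
def phi (c : Comma (𝟭 (Type u)) parallelPairsOfPaths.{u}) : EObj.{u} ⥤ Type u where
  obj := phiObj c
  map := fun f => TypeCat.ofHom (phiMap c f)
  map_id := fun o => rfl
  map_comp := by
    intro o o' o'' (f : EHom o o') (g : EHom o' o'')
    cases f <;> cases g <;> (try rfl)
    case edge.src i =>
      rcases i with i | i <;> (ext x; exact (nthEdge_fst (X := (c.right : Type u)) _ _ _).symm)
    case edge.tgt i =>
      rcases i with i | i <;> (ext x; exact (nthEdge_snd (X := (c.right : Type u)) _ _ _).symm)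

lemma nthEdge_congr {X : Type u} [Quiver.{u} X] {a b a' b' : X} {p : Path a b}
    {p' : Path a' b'} (ha : a = a') (hb : b = b') (hp : HEq p p') (k : ℕ)
    (h : k < p.length) (h' : k < p'.length) : nthEdge p k h = nthEdge p' k h' := by
  subst ha; subst hb; cases hp; rfl

lemma homw {c d : Comma (𝟭 (Type u)) parallelPairsOfPaths.{u}} (φ : c ⟶ d) (x : c.left) :
    d.hom (φ.left x) = parallelPairsOfPaths.map φ.right (c.hom x) := types_congr_hom φ.w x

/-- The functor from 2-computads to presheaves on the indexing category. -/
def Phi : Comma (𝟭 (Type u)) parallelPairsOfPaths.{u} ⥤ (EObj.{u} ⥤ Type u) where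
  obj := phi
  map {c d} φ :=
    { app := fun o => match o with
        | .V => TypeCat.ofHom φ.right.obj
        | .A => TypeCat.ofHom (mapTot φ.right)
        | .C m n => TypeCat.ofHom fun x => ⟨φ.left x.val, by
            constructor
            · erw [homw φ x.val, ppA_map, length_mapPath, x.prop.1]
            · erw [homw φ x.val, ppB_map, length_mapPath, x.prop.2]⟩
      naturality := by
        intro o o' (f : EHom o o')
        cases f with
        | id => rfl
        | src => rfl
        | tgt => rfl
        | vert i =>
            ext x
            induction i using Quot.ind with
            | _ j =>
              rcases j with j | j
              · show φ.right.obj _ = nthVert (ppA (d.hom (φ.left x.val))) j.val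
                erw [homw φ x.val, ppA_map, nthVert_mapPath]
                rfl
              · show φ.right.obj _ = nthVert (ppB (d.hom (φ.left x.val))) j.val
                erw [homw φ x.val, ppB_map, nthVert_mapPath]
                rfl
        | edge i =>
            rcases i with j | j
            · ext x
              have h2 : j.val < (φ.right.mapPath (ppA (c.hom x.val))).length := by
                erw [length_mapPath, x.prop.1]; exact j.isLt
              have ha : (d.hom (φ.left x.val)).obj ParalVertex.s
                  = φ.right.obj ((c.hom x.val).obj ParalVertex.s) := by
                rw [homw φ x.val]; try rfl
              have hb : (d.hom (φ.left x.val)).obj ParalVertex.t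
                  = φ.right.obj ((c.hom x.val).obj ParalVertex.t) := by
                rw [homw φ x.val]; try rfl
              have hp : HEq (ppA (d.hom (φ.left x.val)))
                  (φ.right.mapPath (ppA (c.hom x.val))) := by
                rw [homw φ x.val]; try exact HEq.rfl
              exact ((nthEdge_congr (X := (d.right : Type u)) ha hb hp j.val _ h2).trans
                (nthEdge_mapPath φ.right _ j.val (by rw [x.prop.1]; exact j.isLt) h2)).symm
            · ext x
              have h2 : j.val < (φ.right.mapPath (ppB (c.hom x.val))).length := by
                erw [length_mapPath, x.prop.2]; exact j.isLt
              have ha : (d.hom (φ.left x.val)).obj ParalVertex.s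
                  = φ.right.obj ((c.hom x.val).obj ParalVertex.s) := by
                rw [homw φ x.val]; try rfl
              have hb : (d.hom (φ.left x.val)).obj ParalVertex.t
                  = φ.right.obj ((c.hom x.val).obj ParalVertex.t) := by
                rw [homw φ x.val]; try rfl
              have hp : HEq (ppB (d.hom (φ.left x.val)))
                  (φ.right.mapPath (ppB (c.hom x.val))) := by
                rw [homw φ x.val]; try exact HEq.rfl
              exact ((nthEdge_congr (X := (d.right : Type u)) ha hb hp j.val _ h2).trans
                (nthEdge_mapPath φ.right _ j.val (by rw [x.prop.2]; exact j.isLt) h2)).symm }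
  map_id c := by
    apply NatTrans.ext
    funext o
    cases o with
    | V => rfl
    | A => rfl
    | C m n => ext x; exact Subtype.ext rfl
  map_comp {c d e} φ ψ := by
    apply NatTrans.ext
    funext o
    cases o with
    | V => rfl
    | A => rfl
    | C m n => ext x; exact Subtype.ext rfl
lemma lenA (F : EObj.{u} ⥤ Type u) (y : Σ m n : ℕ, F.obj (.C m n)) :
    (ppA (X := Quiv.of (str F).V) (cell2pp F y)).length = y.1 :=
  (str F).length_path y.1 _ _ _ _

lemma lenB (F : EObj.{u} ⥤ Type u) (y : Σ m n : ℕ, F.obj (.C m n)) :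
    (ppB (X := Quiv.of (str F).V) (cell2pp F y)).length = y.2.1 :=
  (length_cast _ _ _).trans ((str F).length_path y.2.1 _ _ _ _)

/-- Transport of cells along equalities of the shape. -/
def castC (F : EObj.{u} ⥤ Type u) {m' n' m n : ℕ} (h1 : m' = m) (h2 : n' = n)
    (x : F.obj (.C m' n')) : F.obj (.C m n) := h1 ▸ h2 ▸ x

/-- Component of the counit at `F` and a cell object. -/
def counitC (F : EObj.{u} ⥤ Type u) (m n : ℕ) (y : phiObj (Psi.obj F) (.C m n)) :
    F.obj (.C m n) :=
  castC F ((lenA F y.val).symm.trans y.prop.1) ((lenB F y.val).symm.trans y.prop.2) y.val.2.2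

/-- The counit isomorphism components. -/
def counitApp (F : EObj.{u} ⥤ Type u) : (phi (Psi.obj F)) ≅ F := by
  refine NatIso.ofComponents (fun o => match o with
    | .V => Iso.refl (F.obj .V)
    | .A => { hom := TypeCat.ofHom fun (e : phiObj (Psi.obj F) .A) => e.2.2.val
              inv := TypeCat.ofHom fun e => ⟨F.map EHom.src e, F.map EHom.tgt e, ⟨e, rfl, rfl⟩⟩
              hom_inv_id := by
                ext e
                obtain ⟨a, b, e, rfl, rfl⟩ := e
                rfl
              inv_hom_id := rfl }
    | .C m n => { hom := TypeCat.ofHom (counitC F m n)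
                  inv := TypeCat.ofHom fun x => ⟨⟨m, n, x⟩, lenA F ⟨m, n, x⟩, lenB F ⟨m, n, x⟩⟩
                  hom_inv_id := by
                    ext y
                    obtain ⟨⟨m', n', x⟩, h1, h2⟩ := y
                    obtain rfl : m' = m := (lenA F ⟨m', n', x⟩).symm.trans h1
                    obtain rfl : n' = n := (lenB F ⟨m', n', x⟩).symm.trans h2
                    rfl
                  inv_hom_id := rfl }) ?_
  intro o o' (f : EHom o o')
  cases f with
  | id => rw [show EHom.id o = 𝟙 o from rfl]; simp
  | src =>
      ext e
      exact (e.2.2.prop.1).symm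
  | tgt =>
      ext e
      exact (e.2.2.prop.2).symm
  | @vert m n i =>
      ext y
      obtain ⟨⟨m', n', x⟩, h1, h2⟩ := y
      obtain rfl : m' = m := (lenA F ⟨m', n', x⟩).symm.trans h1
      obtain rfl : n' = n := (lenB F ⟨m', n', x⟩).symm.trans h2
      induction i using Quot.ind with
      | _ j =>
        rcases j with j | j
        · exact (str F).nthVert_path m' _ _ _ _ j
        · exact (nthVert_cast (X := (str F).V) _ _ _ _).trans
            ((str F).nthVert_path n' _ _ _ _ j)
  | @edge m n i =>
      ext y
      obtain ⟨⟨m', n', x⟩, h1, h2⟩ := y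
      obtain rfl : m' = m := (lenA F ⟨m', n', x⟩).symm.trans h1
      obtain rfl : n' = n := (lenB F ⟨m', n', x⟩).symm.trans h2
      rcases i with j | j
      · exact congrArg (fun t => t.2.2.val)
          ((str F).nthEdge_path m' (fun i => vmap F x (Quot.mk _ (Sum.inl i)))
            (fun i => emap F x (Sum.inl i)) (fun i => emap_s F x (Sum.inl i))
            (fun i => emap_t F x (Sum.inl i)) j
            (by erw [(str F).length_path]; exact j.isLt))
      · have hlen : j.val < (pathB F x).length := by
          erw [pathB, (str F).length_path]; exact j.isLt
        have h3 := congrArg (fun t => t.2.2.val)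
          (nthEdge_cast (congrArg (vmap F x) gv0) (congrArg (vmap F x) gvl) (pathB F x) j.val
            (by rw [length_cast]; exact hlen) hlen)
        exact h3.trans (congrArg (fun t => t.2.2.val)
          ((str F).nthEdge_path n' (fun i => vmap F x (Quot.mk _ (Sum.inr i)))
            (fun i => emap F x (Sum.inr i)) (fun i => emap_s F x (Sum.inr i))
            (fun i => emap_t F x (Sum.inr i)) j hlen))

/-- The counit isomorphism. -/
def counitIso : Psi.{u} ⋙ Phi.{u} ≅ 𝟭 (EObj.{u} ⥤ Type u) := by
  refine NatIso.ofComponents counitApp ?_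
  intro F F' η
  apply NatTrans.ext
  funext o
  cases o with
  | V => ext v; rfl
  | A => ext e; rfl
  | C m n =>
      ext y
      obtain ⟨⟨m', n', x⟩, h1, h2⟩ := y
      obtain rfl : m' = m := (lenA F ⟨m', n', x⟩).symm.trans h1
      obtain rfl : n' = n := (lenB F ⟨m', n', x⟩).symm.trans h2
      rfl
/-- Packing an element as a cell of its canonical shape. -/
def packC (c : Comma (𝟭 (Type u)) parallelPairsOfPaths.{u}) (x : c.left) :
    Σ m n : ℕ, phiObj c (.C m n) :=
  ⟨(ppA (c.hom x)).length, (ppB (c.hom x)).length, x, rfl, rfl⟩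

lemma cell_eq (c : Comma (𝟭 (Type u)) parallelPairsOfPaths.{u})
    {y y' : Σ m n : ℕ, phiObj c (.C m n)} (h : y.2.2.val = y'.2.2.val) : y = y' := by
  obtain ⟨m, n, x, h1, h2⟩ := y
  obtain ⟨m', n', x', h1', h2'⟩ := y'
  obtain rfl : x = x' := h
  subst h1; subst h2; subst h1'; subst h2'
  rfl

/-- The right component of the unit. -/
def unitRight (c : Comma (𝟭 (Type u)) parallelPairsOfPaths.{u}) :
    c.right ⟶ (Psi.obj (Phi.obj c)).right where
  obj := fun a => a
  map := fun {a b} f => ⟨⟨a, b, f⟩, rfl, rfl⟩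

/-- The inverse of the right component of the unit. -/
def unitRightInv (c : Comma (𝟭 (Type u)) parallelPairsOfPaths.{u}) :
    (Psi.obj (Phi.obj c)).right ⟶ c.right where
  obj := fun a => a
  map := fun {a b} e => Quiver.Hom.cast (U := (c.right : Type u)) e.prop.1 e.prop.2 e.val.2.2

/-- The unit isomorphism. -/
def unitIso : 𝟭 (Comma (𝟭 (Type u)) parallelPairsOfPaths.{u}) ≅ Phi.{u} ⋙ Psi.{u} := by
  refine NatIso.ofComponents (fun c => Comma.isoMk
    { hom := TypeCat.ofHom (packC c)
      inv := TypeCat.ofHom fun (y : Σ m n : ℕ, phiObj c (.C m n)) => y.2.2.val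
      hom_inv_id := rfl
      inv_hom_id := by ext y; exact cell_eq c rfl }
    { hom := unitRight c
      inv := unitRightInv c
      hom_inv_id := by
        refine prefunctor_ext_heq (fun _ => rfl) ?_
        intro a b f
        show HEq ((unitRightInv c).map ((unitRight c).map f)) f
        exact heq_of_eq rfl
      inv_hom_id := by
        refine prefunctor_ext_heq (fun _ => rfl) ?_
        intro a b e
        obtain ⟨⟨a', b', g⟩, h1, h2⟩ := e
        subst h1; subst h2
        exact heq_of_eq rfl }
    ?_) ?_
  · ext x
    refine prefunctor_ext_heq ?_ ?_
    · rintro (_ | _)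
      · exact nthVert_zero (ppA (c.hom x))
      · exact nthVert_of_ge (ppA (c.hom x)) le_rfl
    · rintro z w (_ | _)
      · exact recon (X := (c.right : Type u)) (ppA (c.hom x)) _ _
          (fun i => rfl) (fun i => rfl) _ _
      · refine HEq.trans (Quiver.Path.cast_heq _ _ _) ?_
        exact recon (X := (c.right : Type u)) (ppB (c.hom x)) _ _
          (fun i => rfl) (fun i => rfl) _ _
  · intro c d φ
    apply CommaMorphism.ext
    · ext x
      exact cell_eq d rfl
    · exact prefunctor_ext_heq (fun _ => rfl)
        (fun a b f => heq_of_eq (Subtype.ext rfl))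

/-- The equivalence between 2-computads and presheaves on the indexing category. -/
def mainEquiv : Comma (𝟭 (Type u)) parallelPairsOfPaths.{u} ≌ (EObj.{u} ⥤ Type u) :=
  CategoryTheory.Equivalence.mk Phi.{u} Psi.{u} unitIso.{u} counitIso.{u}
end Schanuel

/-- **Schanuel's observation**: the category of 2-computads, i.e. the comma category of
`Type` over the functor `X ↦ (paral ⟶ T₁.obj X)`, is a presheaf category. -/
theorem twoComputad_presheafCategory :
    ∃ (E : Type u) (_ : SmallCategory E),
      Nonempty (Comma (𝟭 (Type u)) parallelPairsOfPaths.{u} ≌ E ⥤ Type u) := by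
  exact ⟨Schanuel.EObj.{u}, inferInstance, ⟨Schanuel.mainEquiv.{u}⟩⟩
end

section
/- The free-category monad endofunctor T₁ := Cat.free ⋙ Quiv.forget on the category Quiv of quivers preserves limits of every connected shape: for every nonempty connected category J, T₁ preserves limits of shape J. -/
open CategoryTheory CategoryTheory.Limits Quiver

universe w w' u

set_option linter.unusedSectionVars false

namespace FreePreservesAux

section Quivers
variable {V : Type*} [Quiver V] {W : Type*} [Quiver W]

theorem pre_obj_congr {F G : V ⥤q W} (h : F = G) (X : V) : F.obj X = G.obj X := by rw [h]

theorem pre_map_heq {F G : V ⥤q W} (h : F = G) {X Y : V} (f : X ⟶ Y) :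
    HEq (F.map f) (G.map f) := by subst h; rfl

theorem pre_ext' {F G : V ⥤q W}
    (hobj : ∀ X, F.obj X = G.obj X)
    (hmap : ∀ (X Y : V) (f : X ⟶ Y), HEq (F.map f) (G.map f)) : F = G := by
  obtain ⟨Fo, Fm⟩ := F; obtain ⟨Go, Gm⟩ := G
  obtain rfl : Fo = Go := funext hobj
  congr 1
  funext X Y f
  exact eq_of_heq (hmap X Y f)
end Quivers

section Paths2

variable {V : Type u₁} [Quiver.{v₁} V] {W : Type u₂} [Quiver.{v₂} W]

/-- HEq congruence for nil paths. -/
theorem heq_nil {a a' : V} (h : a = a') :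
    HEq (Path.nil : Path a a) (Path.nil : Path a' a') := by subst h; rfl

theorem heq_cons {a a' b b' c c' : V} (ha : a = a') (hb : b = b') (hc : c = c')
    {p : Path a b} {p' : Path a' b'} {e : b ⟶ c} {e' : b' ⟶ c'}
    (hp : HEq p p') (he : HEq e e') : HEq (p.cons e) (p'.cons e') := by
  subst ha; subst hb; subst hc; cases hp; cases he; rfl

theorem path_length_congr {a a' b b' : V} (ha : a = a') (hb : b = b')
    {p : Path a b} {p' : Path a' b'} (h : HEq p p') : p.length = p'.length := by
  subst ha; subst hb; cases h; rfl

theorem length_mapPath (H : V ⥤q W) {a b : V} (p : Path a b) :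
    (H.mapPath p).length = p.length := by
  induction p with
  | nil => rfl
  | cons q e ih => simp [Prefunctor.mapPath_cons, ih]

theorem mapPath_pre_congr {F G : V ⥤q W} (h : F = G) {a b : V} (p : Path a b) :
    HEq (F.mapPath p) (G.mapPath p) := by subst h; rfl

theorem mapPath_comp_pre (F : V ⥤q W) {U : Type u₃} [Quiver.{v₃} U] (G : W ⥤q U)
    {a b : V} (p : Path a b) : (F ⋙q G).mapPath p = G.mapPath (F.mapPath p) := by
  induction p with
  | nil => rfl
  | cons q e ih => exact congrArg (fun r => Path.cons r ((F ⋙q G).map e)) ih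

theorem mapPath_cast_heq (H : V ⥤q W) {a a' b b' : V} (ha : a = a') (hb : b = b')
    (p : Path a b) : HEq (H.mapPath (p.cast ha hb)) (H.mapPath p) := by
  subst ha; subst hb; rfl

theorem map_cast_heq (H : V ⥤q W) {a a' b b' : V} (ha : a = a') (hb : b = b')
    (e : a ⟶ b) : HEq (H.map (Hom.cast ha hb e)) (H.map e) := by
  subst ha; subst hb; rfl

/-- `vtx p k` is the vertex of `p` at distance `k` from the end. -/
def vtx {a : V} : ∀ {b : V}, Path a b → ℕ → V
  | _, .nil, _ => a
  | b, .cons _ _, 0 => b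
  | _, .cons p _, k + 1 => vtx p k

@[simp] theorem vtx_zero {a b : V} (p : Path a b) : vtx p 0 = b := by cases p <;> rfl

theorem vtx_of_length_le {a b : V} (p : Path a b) (k : ℕ) (h : p.length ≤ k) :
    vtx p k = a := by
  induction p generalizing k with
  | nil => rfl
  | cons q e ih =>
    cases k with
    | zero => simp at h
    | succ k => exact ih k (by simpa using h)

theorem vtx_congr {a a' b b' : V} (ha : a = a') (hb : b = b')
    {p : Path a b} {p' : Path a' b'} (h : HEq p p') (k : ℕ) : vtx p k = vtx p' k := by
  subst ha; subst hb; cases h; rfl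

theorem vtx_mapPath (H : V ⥤q W) {a b : V} (p : Path a b) (k : ℕ) :
    vtx (H.mapPath p) k = H.obj (vtx p k) := by
  induction p generalizing k with
  | nil => rfl
  | cons q e ih =>
    cases k with
    | zero => rfl
    | succ k => exact ih k

/-- `edg p k` is the `k`-th edge of `p`, counted from the end. -/
def edg {a : V} : ∀ {b : V} (p : Path a b) (k : ℕ), k < p.length → (vtx p (k + 1) ⟶ vtx p k)
  | _, .nil, k, h => absurd h (by simp)
  | _, .cons p e, 0, _ => Hom.cast (vtx_zero p).symm rfl e
  | _, .cons p _, k + 1, h => edg p k (by simpa using h)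

theorem edg_congr {a a' b b' : V} (ha : a = a') (hb : b = b')
    {p : Path a b} {p' : Path a' b'} (h : HEq p p') (k : ℕ) (hk : k < p.length)
    (hk' : k < p'.length) : HEq (edg p k hk) (edg p' k hk') := by
  subst ha; subst hb; cases h; rfl

theorem edg_mapPath (H : V ⥤q W) {a b : V} (p : Path a b) (k : ℕ) (hk : k < p.length)
    (hk' : k < (H.mapPath p).length) :
    HEq (edg (H.mapPath p) k hk') (H.map (edg p k hk)) := by
  induction p generalizing k with
  | nil => exact absurd hk (by simp)
  | cons q e ih =>
    cases k with
    | zero =>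
      show HEq (edg ((H.mapPath q).cons (H.map e)) 0 _) _
      show HEq (Hom.cast _ _ (H.map e)) (H.map (Hom.cast _ _ e))
      exact (Hom.cast_heq _ _ _).trans (map_cast_heq H _ _ e).symm
    | succ k =>
      show HEq (edg (H.mapPath q) k _) (H.map (edg q k _))
      exact ih k _ _

/-- Remove the last `j` edges of a path. -/
def dropLast {a : V} : ∀ {b : V} (p : Path a b) (j : ℕ), Path a (vtx p j)
  | _, .nil, _ => .nil
  | _, .cons p e, 0 => p.cons e
  | _, .cons p _, j + 1 => dropLast p j

theorem dropLast_zero_heq {a b : V} (p : Path a b) : HEq (dropLast p 0) p := by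
  cases p <;> rfl

theorem dropLast_index_congr {a b : V} (p : Path a b) {j j' : ℕ} (h : j = j') :
    HEq (dropLast p j) (dropLast p j') := by subst h; rfl

theorem dropLast_of_length_le {a b : V} (p : Path a b) (j : ℕ) (h : p.length ≤ j) :
    HEq (dropLast p j) (Path.nil : Path a a) := by
  induction p generalizing j with
  | nil => cases j <;> rfl
  | cons q e ih =>
    cases j with
    | zero => simp at h
    | succ j => exact ih j (by simpa using h)

theorem dropLast_succ {a b : V} (p : Path a b) (j : ℕ) (h : j < p.length) :
    dropLast p j = (dropLast p (j + 1)).cons (edg p j h) := by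
  induction p generalizing j with
  | nil => exact absurd h (by simp)
  | cons q e ih =>
    cases j with
    | zero =>
      show q.cons e = (dropLast q 0).cons (Hom.cast _ _ e)
      exact eq_of_heq (heq_cons rfl (vtx_zero q).symm rfl (dropLast_zero_heq q).symm
        (Hom.cast_heq _ _ e).symm)
    | succ j =>
      show dropLast q j = (dropLast q (j + 1)).cons (edg q j _)
      exact ih j (by simpa using h)

end Paths2


section Walking

/-- The walking path of length `n`: vertices `0, …, n` with an arrow `i ⟶ i+1`. -/
def Wpath (n : ℕ) : Type u := ULift.{u} (Fin (n + 1))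

instance (n : ℕ) : Quiver.{u} (Wpath.{u} n) :=
  ⟨fun i j => ULift.{u} (PLift (i.down.val + 1 = j.down.val))⟩

variable {W : Type u₂} [Quiver.{v₂} W]

/-- The prefunctor from the walking path picking out a path of length `n`. -/
def toPre (n : ℕ) {a b : W} (p : Path a b) (hp : p.length = n) : Wpath.{u} n ⥤q W where
  obj i := vtx p (n - i.down.val)
  map {i i'} f :=
    Hom.cast (congrArg (vtx p)
        (by have h1 := f.down.down; have h2 := i'.down.isLt; omega)) rfl
      (edg p (n - i'.down.val)
        (by rw [hp]; have h1 := f.down.down; have h2 := i'.down.isLt; omega))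

theorem toPre_congr {n : ℕ} {a a' b b' : W} (ha : a = a') (hb : b = b')
    {p : Path a b} {p' : Path a' b'} (h : HEq p p') {hp : p.length = n}
    {hp' : p'.length = n} : toPre n p hp = toPre n p' hp' := by
  subst ha; subst hb; cases h; rfl

variable {W' : Type u₃} [Quiver.{v₃} W']

theorem toPre_comp (n : ℕ) {a b : W} (p : Path a b) (hp : p.length = n) (H : W ⥤q W') :
    toPre n p hp ⋙q H = toPre n (H.mapPath p) (by rw [length_mapPath]; exact hp) := by
  apply pre_ext'
  · intro i
    exact (vtx_mapPath H p _).symm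
  · intro i i' f
    dsimp only [Prefunctor.comp, toPre]
    refine ((map_cast_heq H _ _ _).trans ?_).trans (Hom.cast_heq _ _ _).symm
    exact (edg_mapPath H p _ _ _).symm

/-- The zeroth vertex. -/
def z0 (n : ℕ) : Wpath.{u} n := ⟨⟨0, Nat.succ_pos n⟩⟩

/-- The path underlying a prefunctor out of the walking path. -/
def seg {n : ℕ} (G : Wpath.{u} n ⥤q W) :
    ∀ (k : ℕ) (hk : k ≤ n), Path (G.obj (z0 n)) (G.obj ⟨⟨k, Nat.lt_succ_of_le hk⟩⟩)
  | 0, _ => .nil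
  | k + 1, hk => .cons (seg G k (Nat.le_of_succ_le hk)) (G.map ⟨⟨rfl⟩⟩)

def pathOf {n : ℕ} (G : Wpath.{u} n ⥤q W) :
    Path (G.obj (z0 n)) (G.obj ⟨⟨n, Nat.lt_succ_of_le le_rfl⟩⟩) :=
  seg G n le_rfl

theorem seg_comp {n : ℕ} (G : Wpath.{u} n ⥤q W) (H : W ⥤q W') (k : ℕ) (hk : k ≤ n) :
    seg (G ⋙q H) k hk = H.mapPath (seg G k hk) := by
  induction k with
  | zero => rfl
  | succ k ih =>
    show Path.cons (seg (G ⋙q H) k _) _ = _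
    rw [seg, Prefunctor.mapPath_cons, ih]
    rfl

theorem pathOf_comp {n : ℕ} (G : Wpath.{u} n ⥤q W) (H : W ⥤q W') :
    pathOf (G ⋙q H) = H.mapPath (pathOf G) :=
  seg_comp G H n le_rfl

theorem pathOf_congr {n : ℕ} {G G' : Wpath.{u} n ⥤q W} (h : G = G') :
    HEq (pathOf G) (pathOf G') := by subst h; rfl

theorem seg_toPre {n : ℕ} {a b : W} (p : Path a b) (hp : p.length = n) (k : ℕ) (hk : k ≤ n) :
    HEq (seg (toPre.{u} n p hp) k hk) (dropLast p (n - k)) := by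
  induction k with
  | zero =>
    refine (heq_nil (a' := a) (vtx_of_length_le p n (by omega))).trans ?_
    exact (dropLast_of_length_le p (n - 0) (by omega)).symm
  | succ k ih =>
    have hlt : n - (k + 1) < p.length := by omega
    rw [dropLast_succ p (n - (k + 1)) hlt, seg]
    dsimp only [toPre]
    refine heq_cons (vtx_of_length_le p (n - 0) (by omega)) (congrArg (vtx p) (by show n - k = n - (k + 1) + 1; omega))
      rfl ?_ ?_
    · exact (ih (Nat.le_of_succ_le hk)).trans
        (dropLast_index_congr p (by omega : n - k = n - (k + 1) + 1))
    · exact Hom.cast_heq _ _ _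

theorem pathOf_toPre {n : ℕ} {a b : W} (p : Path a b) (hp : p.length = n) :
    HEq (pathOf (toPre.{u} n p hp)) p := by
  refine (seg_toPre p hp n le_rfl).trans ?_
  rw [Nat.sub_self]
  exact dropLast_zero_heq p

end Walking

section Main

variable {J : Type w} [Category.{w'} J] {K : J ⥤ Quiv.{u, u}} {c : Cone K}

theorem cone_obj_compat {j j' : J} (f : j ⟶ j') (v : ↑c.pt) :
    (K.map f).obj ((c.π.app j).obj v) = (c.π.app j').obj v :=
  pre_obj_congr (c.w f) v

/-- The cone over `K` with apex the walking path of length `n`, built from a compatible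
family of paths of length `n`. -/
def mkCone (n : ℕ) (x y : ∀ j, ↑(K.obj j)) (p : ∀ j, Path (x j) (y j))
    (hn : ∀ j, (p j).length = n)
    (hx : ∀ {j j'} (f : j ⟶ j'), (K.map f).obj (x j) = x j')
    (hy : ∀ {j j'} (f : j ⟶ j'), (K.map f).obj (y j) = y j')
    (hp : ∀ {j j'} (f : j ⟶ j'), HEq ((K.map f).mapPath (p j)) (p j')) : Cone K where
  pt := Quiv.of (Wpath.{u} n)
  π :=
    { app := fun j => (toPre n (p j) (hn j) : Wpath.{u} n ⥤q ↑(K.obj j))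
      naturality := fun j j' f => by
        dsimp
        refine Eq.trans ?_ (toPre_comp n (p j) (hn j) (K.map f)).symm
        exact (toPre_congr (hp' := hn j') (hx f) (hy f) (hp f)).symm }

/-- The constant prefunctor from the walking path of length 0. -/
def constPre {W : Type u₂} [Quiver.{v₂} W] (u : W) : Wpath.{u'} 0 ⥤q W where
  obj _ := u
  map {i i'} f := absurd f.down.down (by have := i'.down.isLt; omega)

theorem vertex_unique (hc : IsLimit c) (v w : ↑c.pt)
    (h : ∀ j, (c.π.app j).obj v = (c.π.app j).obj w) : v = w := by
  let C : Cone K := mkCone 0 (fun j => (c.π.app j).obj v) (fun j => (c.π.app j).obj v)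
    (fun j => Path.nil) (fun j => rfl) (fun f => cone_obj_compat f v)
    (fun f => cone_obj_compat f v)
    (fun f => by rw [Prefunctor.mapPath_nil]; exact heq_nil (cone_obj_compat f v))
  have h1 : ∀ j, (constPre v : Wpath.{u} 0 ⥤q ↑c.pt) ≫ c.π.app j = C.π.app j := by
    intro j
    apply pre_ext'
    · intro i; rfl
    · intro i i' f; exact absurd f.down.down (by have := i'.down.isLt; omega)
  have h2 : ∀ j, (constPre w : Wpath.{u} 0 ⥤q ↑c.pt) ≫ c.π.app j = C.π.app j := by
    intro j
    apply pre_ext'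
    · intro i; exact (h j).symm
    · intro i i' f; exact absurd f.down.down (by have := i'.down.isLt; omega)
  have := (hc.uniq C _ h1).trans (hc.uniq C _ h2).symm
  exact pre_obj_congr this (z0 0)

theorem path_exists' (hc : IsLimit c) (n : ℕ) (x y : ∀ j, ↑(K.obj j))
    (p : ∀ j, Path (x j) (y j)) (hn : ∀ j, (p j).length = n)
    (hx : ∀ {j j'} (f : j ⟶ j'), (K.map f).obj (x j) = x j')
    (hy : ∀ {j j'} (f : j ⟶ j'), (K.map f).obj (y j) = y j')
    (hp : ∀ {j j'} (f : j ⟶ j'), HEq ((K.map f).mapPath (p j)) (p j'))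
    (v w : ↑c.pt) (hv : ∀ j, (c.π.app j).obj v = x j) (hw : ∀ j, (c.π.app j).obj w = y j) :
    ∃ P : Path v w, ∀ j, HEq ((c.π.app j).mapPath P) (p j) := by
  let C : Cone K := mkCone n x y p hn hx hy hp
  let G : Wpath.{u} n ⥤q ↑c.pt := hc.lift C
  have hv' : ∀ j, (c.π.app j).obj (G.obj (z0 n)) = x j := fun j =>
    (pre_obj_congr (hc.fac C j) (z0 n)).trans
      (vtx_of_length_le (p j) (n - 0) (by rw [hn j]; omega))
  have hw' : ∀ j, (c.π.app j).obj (G.obj ⟨⟨n, Nat.lt_succ_of_le le_rfl⟩⟩) = y j := fun j =>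
    (pre_obj_congr (hc.fac C j) _).trans
      (by show vtx (p j) (n - n) = y j; rw [Nat.sub_self]; exact vtx_zero (p j))
  have hvv : G.obj (z0 n) = v := vertex_unique hc _ _ (fun j => (hv' j).trans (hv j).symm)
  have hww : G.obj ⟨⟨n, Nat.lt_succ_of_le le_rfl⟩⟩ = w :=
    vertex_unique hc _ _ (fun j => (hw' j).trans (hw j).symm)
  refine ⟨(pathOf G).cast hvv hww, fun j => ?_⟩
  refine (mapPath_cast_heq _ hvv hww _).trans ?_
  rw [show (c.π.app j).mapPath (pathOf G) = pathOf (G ⋙q c.π.app j) from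
    (pathOf_comp G (c.π.app j)).symm]
  refine (pathOf_congr ?_).trans (pathOf_toPre (p j) (hn j))
  exact hc.fac C j

theorem path_unique [IsConnected J] (hc : IsLimit c) {v w : ↑c.pt} (P Q : Path v w)
    (h : ∀ j, (c.π.app j).mapPath P = (c.π.app j).mapPath Q) : P = Q := by
  have hQ : Q.length = P.length := by
    have := congrArg Path.length (h (Classical.arbitrary J))
    rw [length_mapPath, length_mapPath] at this
    exact this.symm
  let C : Cone K := mkCone P.length (fun j => (c.π.app j).obj v) (fun j => (c.π.app j).obj w)
    (fun j => (c.π.app j).mapPath P) (fun j => length_mapPath _ _)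
    (fun f => cone_obj_compat f v) (fun f => cone_obj_compat f w)
    (fun {j j'} f => by
      rw [← mapPath_comp_pre]
      exact mapPath_pre_congr (by rw [← Quiv.comp_eq_comp]; exact c.w f) P)
  have hGP : ∀ j, (toPre P.length P rfl : Wpath.{u} _ ⥤q ↑c.pt) ≫ c.π.app j = C.π.app j :=
    fun j => by exact toPre_comp _ P rfl (c.π.app j)
  have hGQ : ∀ j, (toPre P.length Q hQ : Wpath.{u} _ ⥤q ↑c.pt) ≫ c.π.app j = C.π.app j :=
    fun j => by
      refine (toPre_comp _ Q hQ (c.π.app j)).trans ?_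
      exact Eq.trans
        (toPre_congr (hp' := by rw [length_mapPath]) rfl rfl (heq_of_eq (h j).symm)) rfl
  have hPQ : toPre P.length P rfl = toPre P.length Q hQ :=
    (hc.uniq C _ hGP).trans (hc.uniq C _ hGQ).symm
  exact eq_of_heq ((pathOf_toPre P rfl).symm.trans
    ((pathOf_congr hPQ).trans (pathOf_toPre Q hQ)))

section Lifting

variable [IsConnected J] (hc : IsLimit c)
  (s : Cone (K ⋙ (Cat.free ⋙ Quiv.forget : Quiv.{u, u} ⥤ Quiv.{u, u})))

theorem sobj (X : ↑s.pt) {j j' : J} (f : j ⟶ j') :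
    (K.map f).obj ((s.π.app j).obj X) = (s.π.app j').obj X :=
  pre_obj_congr (s.w f) X

theorem smap {X Y : ↑s.pt} (α : X ⟶ Y) {j j' : J} (f : j ⟶ j') :
    HEq ((K.map f).mapPath ((s.π.app j).map α)) ((s.π.app j').map α) :=
  pre_map_heq (s.w f) α

/-- The cone of constant paths at the projections of `X`. -/
def objCone (X : ↑s.pt) : Cone K :=
  mkCone 0 (fun j => (s.π.app j).obj X) (fun j => (s.π.app j).obj X)
    (fun _ => Path.nil) (fun _ => rfl) (fun f => sobj s X f) (fun f => sobj s X f)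
    (fun f => by exact heq_nil (sobj s X f))

/-- The object part of the lifted prefunctor. -/
noncomputable def vObj (X : ↑s.pt) : ↑c.pt :=
  (hc.lift (objCone s X)).obj (z0 0)

theorem vObj_spec (j : J) (X : ↑s.pt) :
    (c.π.app j).obj (vObj hc s X) = (s.π.app j).obj X :=
  pre_obj_congr (hc.fac (objCone s X) j) (z0 0)

theorem len_const {X Y : ↑s.pt} (α : X ⟶ Y) (j : J) :
    ((s.π.app j).map α).length = ((s.π.app (Classical.arbitrary J)).map α).length :=
  constant_of_preserves_morphisms (fun j => ((s.π.app j).map α).length)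
    (fun j j' f => by
      show ((s.π.app j).map α).length = ((s.π.app j').map α).length
      rw [← length_mapPath (K.map f) ((s.π.app j).map α)]
      exact path_length_congr (sobj s X f) (sobj s Y f) (smap s α f)) j _

/-- The arrow part of the lifted prefunctor. -/
noncomputable def pMap {X Y : ↑s.pt} (α : X ⟶ Y) : Path (vObj hc s X) (vObj hc s Y) :=
  (path_exists' hc ((s.π.app (Classical.arbitrary J)).map α).length
    (fun j => (s.π.app j).obj X) (fun j => (s.π.app j).obj Y)
    (fun j => (s.π.app j).map α) (len_const s α)
    (fun f => sobj s X f) (fun f => sobj s Y f) (fun f => smap s α f)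
    (vObj hc s X) (vObj hc s Y)
    (fun j => vObj_spec hc s j X) (fun j => vObj_spec hc s j Y)).choose

theorem pMap_spec {X Y : ↑s.pt} (α : X ⟶ Y) (j : J) :
    HEq ((c.π.app j).mapPath (pMap hc s α)) ((s.π.app j).map α) :=
  (path_exists' hc ((s.π.app (Classical.arbitrary J)).map α).length
    (fun j => (s.π.app j).obj X) (fun j => (s.π.app j).obj Y)
    (fun j => (s.π.app j).map α) (len_const s α)
    (fun f => sobj s X f) (fun f => sobj s Y f) (fun f => smap s α f)
    (vObj hc s X) (vObj hc s Y)
    (fun j => vObj_spec hc s j X) (fun j => vObj_spec hc s j Y)).choose_spec j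

end Lifting

end Main

end FreePreservesAux

open FreePreservesAux in
/-- The free-category monad endofunctor `T₁ = Cat.free ⋙ Quiv.forget` on `Quiv`
preserves limits of every nonempty connected shape. -/
theorem freeCategoryMonad_preservesConnectedLimits (J : Type w) [Category.{w'} J]
    [IsConnected J] :
    PreservesLimitsOfShape J (Cat.free ⋙ Quiv.forget : Quiv.{u, u} ⥤ Quiv.{u, u}) := by
  constructor
  intro K
  constructor
  intro c hc
  refine ⟨?_⟩
  refine
    { lift := fun s =>
        ({ obj := fun X => vObj hc s X
           map := fun α => pMap hc s α } : ↑s.pt ⥤q Paths ↑c.pt)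
      fac := fun s j =>
        pre_ext' (fun X => vObj_spec hc s j X) (fun X Y α => pMap_spec hc s α j)
      uniq := fun s m hm => ?_ }
  · have hobj : ∀ X, m.obj X = vObj hc s X := fun X =>
      vertex_unique hc _ _
        (fun j => (pre_obj_congr (hm j) X).trans (vObj_spec hc s j X).symm)
    refine pre_ext' hobj fun X Y α => ?_
    have hcast : Quiver.Path.cast (U := ↑c.pt) (hobj X) (hobj Y) (m.map α) = pMap hc s α := by
      apply path_unique hc
      intro j
      refine eq_of_heq (((mapPath_cast_heq _ _ _ _).trans ?_).trans (pMap_spec hc s α j).symm)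
      exact pre_map_heq (hm j) α
    exact (Quiver.Path.cast_heq (U := ↑c.pt) (hobj X) (hobj Y) (m.map α)).symm.trans
      (heq_of_eq hcast)
end

section
/- Let paral denote the quiver with two vertices s and t and exactly two arrows, both from s to t, and let T₁ := Cat.free ⋙ Quiv.forget be the free-category monad endofunctor on Quiv. Then the functor Quiv ⥤ Type sending a quiver X to the set of quiver morphisms (prefunctors) paral ⟶ T₁.obj X (the set of parallel pairs of paths in X) is a parametric right adjoint. -/
open CategoryTheory CategoryTheory.Limits

universe u

/-! ### Auxiliary development -/

namespace ParametricRightAdjointAux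

open Quiver

section Paths

variable {X : Type*} [Quiver X] {Y : Type*} [Quiver Y]

/-- cast a hom along endpoint equalities -/
def qcast {a a' b b' : X} (ha : a = a') (hb : b = b') (f : a ⟶ b) : a' ⟶ b' := ha ▸ hb ▸ f

lemma qcast_heq {a a' b b' : X} (ha : a = a') (hb : b = b') (f : a ⟶ b) :
    HEq (qcast ha hb f) f := by subst ha; subst hb; rfl

/-- cast a path along endpoint equalities -/
def pcast {a a' b b' : X} (ha : a = a') (hb : b = b') (p : Path a b) : Path a' b' :=
  ha ▸ hb ▸ p

lemma pcast_heq {a a' b b' : X} (ha : a = a') (hb : b = b') (p : Path a b) :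
    HEq (pcast ha hb p) p := by subst ha; subst hb; rfl

@[simp] lemma pcast_length {a a' b b' : X} (ha : a = a') (hb : b = b') (p : Path a b) :
    (pcast ha hb p).length = p.length := by subst ha; subst hb; rfl

lemma prefunctor_ext' {V W : Type*} [Quiver V] [Quiver W] {F G : V ⥤q W}
    (hobj : ∀ v, F.obj v = G.obj v)
    (hmap : ∀ {x y : V} (f : x ⟶ y), HEq (F.map f) (G.map f)) : F = G := by
  obtain ⟨Fo, Fm⟩ := F
  obtain ⟨Go, Gm⟩ := G
  obtain rfl : Fo = Go := funext hobj
  have : @Fm = @Gm := by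
    funext x y f
    exact eq_of_heq (hmap f)
  rw [this]

/-- vertex of a path at distance `k` from the end (clamped). -/
def vtxE {x : X} : ℕ → {y : X} → Path x y → X
  | 0, y, _ => y
  | _+1, _, .nil => x
  | k+1, _, .cons p _ => vtxE k p

@[simp] lemma vtxE_zero {x y : X} (p : Path x y) : vtxE 0 p = y := rfl

@[simp] lemma vtxE_length {x y : X} (p : Path x y) : vtxE p.length p = x := by
  induction p with
  | nil => rfl
  | cons p e ih => exact ih

lemma vtxE_congr {x y : X} (p : Path x y) {j k : ℕ} (h : j = k) : vtxE j p = vtxE k p := by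
  subst h; rfl

lemma vtxE_pcast {a a' b b' : X} (ha : a = a') (hb : b = b') (p : Path a b) (k : ℕ) :
    vtxE k (pcast ha hb p) = vtxE k p := by subst ha; subst hb; rfl

/-- arrow of a path at distance `k` from the end. -/
def arrE {x : X} : (k : ℕ) → {y : X} → (p : Path x y) → k < p.length → (vtxE (k+1) p ⟶ vtxE k p)
  | 0, _, .cons _ e, _ => e
  | k+1, _, .cons p _, h => arrE k p (by simpa [Path.length] using h)

lemma arrE_congr {x y : X} (p : Path x y) {j k : ℕ} (h : j = k) (hj : j < p.length)
    (hk : k < p.length) : HEq (arrE j p hj) (arrE k p hk) := by subst h; rfl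

lemma arrE_pcast {a a' b b' : X} (ha : a = a') (hb : b = b') (p : Path a b) (k : ℕ)
    (h : k < (pcast ha hb p).length) :
    HEq (arrE k (pcast ha hb p) h) (arrE k p (by simpa using h)) := by
  subst ha; subst hb; rfl

/-- assemble a path from a chain of arrows, indexed from the start -/
def asm : (m : ℕ) → (g : {i : ℕ // i ≤ m} → X) →
    (ar : ∀ (i : ℕ) (h : i < m), g ⟨i, le_of_lt h⟩ ⟶ g ⟨i+1, h⟩) →
    Path (g ⟨0, Nat.zero_le _⟩) (g ⟨m, le_refl _⟩)
  | 0, _, _ => .nil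
  | m+1, g, ar =>
    (asm m (fun i => g ⟨i.1, le_trans i.2 (Nat.le_succ m)⟩)
      (fun i h => ar i (Nat.lt_succ_of_lt h))).cons (ar m (Nat.lt_succ_self m))

lemma ar_hcongr {m : ℕ} {g : {i : ℕ // i ≤ m} → X}
    (ar : ∀ (i : ℕ) (h : i < m), g ⟨i, le_of_lt h⟩ ⟶ g ⟨i+1, h⟩) {i j : ℕ} (h : i = j)
    (hi : i < m) (hj : j < m) : HEq (ar i hi) (ar j hj) := by subst h; rfl

@[simp] lemma asm_length (m : ℕ) (g : {i : ℕ // i ≤ m} → X) (ar) :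
    (asm m g ar).length = m := by
  induction m with
  | zero => rfl
  | succ m ih => simpa [asm, Path.length] using ih _ _

lemma asm_congr {m : ℕ} {g g' : {i : ℕ // i ≤ m} → X} (hg : ∀ i, g i = g' i)
    {ar ar'} (har : ∀ (i : ℕ) (h : i < m), HEq (ar i h) (ar' i h)) :
    HEq (asm m g ar) (asm m g' ar') := by
  obtain rfl : g = g' := funext hg
  obtain rfl : @ar = @ar' := by funext i h; exact eq_of_heq (har i h)
  rfl

lemma vtxE_asm (m : ℕ) (g : {i : ℕ // i ≤ m} → X) (ar) (k : ℕ) (hk : k ≤ m) :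
    vtxE k (asm m g ar) = g ⟨m - k, Nat.sub_le m k⟩ := by
  induction m generalizing k with
  | zero => interval_cases k; rfl
  | succ m ih =>
    cases k with
    | zero => rfl
    | succ k =>
      have h1 : vtxE (k+1) (asm (m+1) g ar)
          = vtxE k (asm m (fun i => g ⟨i.1, le_trans i.2 (Nat.le_succ m)⟩)
            (fun i h => ar i (Nat.lt_succ_of_lt h))) := rfl
      rw [h1, ih _ _ k (by omega)]
      exact congrArg g (Subtype.ext (by simp))

lemma arrE_asm (m : ℕ) (g : {i : ℕ // i ≤ m} → X) (ar) (k : ℕ) (hk : k < (asm m g ar).length)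
    (hk' : k < m) :
    HEq (arrE k (asm m g ar) hk) (ar (m - 1 - k) (by omega)) := by
  induction m generalizing k with
  | zero => omega
  | succ m ih =>
    cases k with
    | zero => exact HEq.rfl
    | succ k =>
      have h1 : HEq (arrE (k+1) (asm (m+1) g ar) hk)
          (arrE k (asm m (fun i => g ⟨i.1, le_trans i.2 (Nat.le_succ m)⟩)
            (fun i h => ar i (Nat.lt_succ_of_lt h))) (by simpa [asm, Path.length] using hk)) :=
        HEq.rfl
      refine h1.trans ((ih _ _ k _ (by omega)).trans ?_)
      exact ar_hcongr ar (by omega) _ _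

lemma cons_hcongr {x x' b b' y y' : X} (hx : x = x') (hb : b = b') (hy : y = y')
    {p : Path x b} {p' : Path x' b'} (hp : HEq p p') {e : b ⟶ y} {e' : b' ⟶ y'}
    (he : HEq e e') : HEq (p.cons e) (p'.cons e') := by
  subst hx; subst hb; subst hy
  rw [eq_of_heq hp, eq_of_heq he]

/-- the canonical vertex chain of a path of length `m`, indexed from the start -/
def pvtx {x y : X} (p : Path x y) (m : ℕ) : {i : ℕ // i ≤ m} → X :=
  fun i => vtxE (m - i.1) p

/-- the canonical arrow chain of a path of length `m` -/
def parr {x y : X} (p : Path x y) (m : ℕ) (hm : p.length = m) (i : ℕ) (h : i < m) :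
    pvtx p m ⟨i, le_of_lt h⟩ ⟶ pvtx p m ⟨i+1, h⟩ :=
  qcast (vtxE_congr p (show m - i - 1 + 1 = m - i by omega)) rfl
    (arrE (m - i - 1) p (by omega))

lemma pvtx_zero {x y : X} (p : Path x y) (m : ℕ) (hm : p.length = m) :
    pvtx p m ⟨0, Nat.zero_le _⟩ = x := by
  subst hm; exact vtxE_length p

lemma pvtx_last {x y : X} (p : Path x y) (m : ℕ) :
    pvtx p m ⟨m, le_refl _⟩ = y := by
  simp [pvtx]

lemma asm_reassemble {x y : X} (p : Path x y) (m : ℕ) (hm : p.length = m) :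
    HEq (asm m (pvtx p m) (parr p m hm)) p := by
  subst hm
  induction p with
  | nil => exact HEq.rfl
  | @cons b c p e ih =>
    have h1 : pvtx (p.cons e) (p.length+1) ⟨0, Nat.zero_le _⟩ = x := pvtx_zero _ _ rfl
    have h2 : pvtx (p.cons e) (p.length+1) ⟨p.length, Nat.le_succ _⟩ = b :=
      vtxE_congr (p.cons e) (show p.length + 1 - p.length = 0 + 1 by omega)
    have h3 : HEq (asm p.length
        (fun i => pvtx (p.cons e) (p.length+1) ⟨i.1, le_trans i.2 (Nat.le_succ _)⟩)
        (fun i h => parr (p.cons e) (p.length+1) rfl i (Nat.lt_succ_of_lt h))) p := by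
      refine ((asm_congr ?_ ?_).trans ih)
      · intro i
        have hi := i.2
        exact vtxE_congr (p.cons e) (show p.length + 1 - i.1 = (p.length - i.1) + 1 by omega)
      · intro i h
        refine (qcast_heq _ _ _).trans (HEq.trans (HEq.trans
          (arrE_congr (p.cons e)
            (show p.length + 1 - i - 1 = (p.length - i - 1) + 1 by omega) _
            (by simp [Path.length]; omega)) ?_) (qcast_heq _ _ _).symm)
        exact HEq.rfl
    have h4 : HEq (parr (p.cons e) (p.length+1) rfl p.length (Nat.lt_succ_self _)) e := by
      refine (qcast_heq _ _ _).trans ((arrE_congr (p.cons e)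
        (show p.length + 1 - p.length - 1 = 0 by omega) _ (by simp [Path.length])).trans ?_)
      exact HEq.rfl
    exact cons_hcongr h1 h2 (pvtx_last (p.cons e) (p.length+1)) h3 h4

lemma mapPath_asm (F : X ⥤q Y) (m : ℕ) (g : {i : ℕ // i ≤ m} → X) (ar) :
    F.mapPath (asm m g ar) = asm m (fun i => F.obj (g i)) (fun i h => F.map (ar i h)) := by
  induction m with
  | zero => rfl
  | succ m ih =>
    have h1 : asm (m+1) g ar
        = (asm m (fun i => g ⟨i.1, le_trans i.2 (Nat.le_succ m)⟩)
          (fun i h => ar i (Nat.lt_succ_of_lt h))).cons (ar m (Nat.lt_succ_self m)) := rfl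
    rw [h1, Prefunctor.mapPath_cons, ih]
    rfl

@[simp] lemma mapPath_length' (F : X ⥤q Y) {x y : X} (p : Path x y) :
    (F.mapPath p).length = p.length := by
  induction p with
  | nil => rfl
  | cons p e ih => simpa [Path.length] using ih

lemma mapPath_pcast (F : X ⥤q Y) {a a' b b' : X} (ha : a = a') (hb : b = b')
    (p : Path a b) : HEq (F.mapPath (pcast ha hb p)) (F.mapPath p) := by
  subst ha; subst hb; rfl

/-- paths in a quiver with subsingleton vertices and arrows are determined by length -/
lemma arr_hsub {V : Type*} [Quiver V] (ha : ∀ (x y : V) (g h : x ⟶ y), g = h)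
    {x y x' y' : V} (hx : x = x') (hy : y = y') (g : x ⟶ y) (h : x' ⟶ y') : HEq g h := by
  subst hx; subst hy
  exact heq_of_eq (ha _ _ g h)

/-- paths in a quiver with subsingleton vertices and arrows are determined by length -/
lemma path_heq_of_length {V : Type*} [Quiver V] (hv : ∀ x y : V, x = y)
    (ha : ∀ (x y : V) (g h : x ⟶ y), g = h) {a b : V} (p : Path a b) :
    ∀ {a' b' : V} (q : Path a' b'), p.length = q.length → HEq p q := by
  induction p with
  | nil =>
    intro a' b' q h
    cases q with
    | nil =>
      obtain rfl : a' = a := hv _ _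
      rfl
    | cons q e => simp [Path.length] at h
  | cons p e ih =>
    intro a' b' q hlen
    cases q with
    | nil => simp [Path.length] at hlen
    | cons q f =>
      exact (cons_hcongr (hv _ _) (hv _ _) (hv _ _)
        (ih q (by simpa [Path.length] using hlen)) (arr_hsub ha (hv _ _) (hv _ _) e f)).symm.symm

end Paths

/-! ### The lengths of the two paths of a parallel pair -/

/-- Reinterpret an arrow of the path quiver of `X` as a path in `X`. -/
def asPath {X : Quiv.{u,u}} {a b : ((Cat.free ⋙ Quiv.forget).obj X : Quiv.{u,u})}
    (p : a ⟶ b) : Quiver.Path (V := (X : Type u)) a b := p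

/-- The length of the image of the arrow `a`. -/
def lenA {X : Quiv.{u,u}} (t : paral.{u} ⟶ (Cat.free ⋙ Quiv.forget).obj X) : ℕ :=
  (asPath (t.map ParalArrow.a)).length

/-- The length of the image of the arrow `b`. -/
def lenB {X : Quiv.{u,u}} (t : paral.{u} ⟶ (Cat.free ⋙ Quiv.forget).obj X) : ℕ :=
  (asPath (t.map ParalArrow.b)).length

lemma lenA_comp {X Y : Quiv.{u,u}} (g : X ⟶ Y)
    (t : paral.{u} ⟶ (Cat.free ⋙ Quiv.forget).obj X) :
    lenA (t ≫ (Cat.free ⋙ Quiv.forget).map g) = lenA t := by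
  show (g.mapPath (t.map ParalArrow.a : Quiver.Path _ _)).length = _
  erw [mapPath_length']
  rfl

lemma lenB_comp {X Y : Quiv.{u,u}} (g : X ⟶ Y)
    (t : paral.{u} ⟶ (Cat.free ⋙ Quiv.forget).obj X) :
    lenB (t ≫ (Cat.free ⋙ Quiv.forget).map g) = lenB t := by
  show (g.mapPath (t.map ParalArrow.b : Quiver.Path _ _)).length = _
  erw [mapPath_length']
  rfl

/-! ### The terminal quiver has subsingleton vertices and arrows -/

lemma top_vertex_eq (x y : (⊤_ Quiv.{u,u} : Quiv.{u,u})) : x = y := by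
  let i : (⊤_ Quiv.{u,u}) ⟶ terminalQuiv.{u} := Nonempty.some inferInstance
  let r : terminalQuiv.{u} ⟶ ⊤_ Quiv.{u,u} := terminal.from _
  have hir : i ≫ r = 𝟙 (⊤_ Quiv.{u,u}) := terminal.hom_ext _ _
  have hobj : ∀ z : (⊤_ Quiv.{u,u} : Quiv.{u,u}), r.obj (i.obj z) = z := fun z =>
    congrFun (congrArg Prefunctor.obj hir) z
  have : i.obj x = i.obj y := Subsingleton.elim (α := PUnit) _ _
  rw [← hobj x, ← hobj y, this]

lemma top_arrow_eq (x y : (⊤_ Quiv.{u,u} : Quiv.{u,u})) (g h : x ⟶ y) : g = h := by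
  let i : (⊤_ Quiv.{u,u}) ⟶ terminalQuiv.{u} := Nonempty.some inferInstance
  let r : terminalQuiv.{u} ⟶ ⊤_ Quiv.{u,u} := terminal.from _
  have hir : i ≫ r = 𝟙 (⊤_ Quiv.{u,u}) := terminal.hom_ext _ _
  have key : ∀ (F : ⊤_ Quiv.{u,u} ⟶ ⊤_ Quiv.{u,u}) (hF : F = 𝟙 _) (e : x ⟶ y),
      HEq (F.map e) e := by
    intro F hF e
    subst hF
    rfl
  have hg : HEq (r.map (i.map g)) g := key (i ≫ r) hir g
  have hh : HEq (r.map (i.map h)) h := key (i ≫ r) hir h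
  have : i.map g = i.map h := Subsingleton.elim (α := PUnit) _ _
  rw [this] at hg
  exact eq_of_heq (hg.symm.trans hh)

/-- Prefunctors from `paral` to the paths of the terminal quiver are determined by the two
lengths. -/
lemma hom_to_top_ext {t t' : paral.{u} ⟶ (Cat.free ⋙ Quiv.forget).obj (⊤_ Quiv.{u,u})}
    (hA : lenA t = lenA t') (hB : lenB t = lenB t') : t = t' := by
  apply prefunctor_ext'
  · intro v
    exact top_vertex_eq _ _
  · intro x y g
    change ParalArrow x y at g
    cases g with
    | a =>
      exact path_heq_of_length top_vertex_eq top_arrow_eq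
        (asPath (t.map ParalArrow.a)) (asPath (t'.map ParalArrow.a)) hA
    | b =>
      exact path_heq_of_length top_vertex_eq top_arrow_eq
        (asPath (t.map ParalArrow.b)) (asPath (t'.map ParalArrow.b)) hB


/-! ### The left adjoint to the comparison functor -/

noncomputable section Main

variable (f : Over (parallelPairsOfPaths.{u}.obj (⊤_ Quiv.{u,u})))

/-- the prescribed length of the first path -/
def ms (s : f.left) : ℕ :=
  lenA (show paral.{u} ⟶ (Cat.free ⋙ Quiv.forget).obj (⊤_ Quiv.{u,u}) from f.hom s)

/-- the prescribed length of the second path -/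
def ns (s : f.left) : ℕ :=
  lenB (show paral.{u} ⟶ (Cat.free ⋙ Quiv.forget).obj (⊤_ Quiv.{u,u}) from f.hom s)

/-- base vertices: for each point of `f.left`, two chains of prescribed lengths -/
def LBase : Type u := Σ s : f.left, ({i : ℕ // i ≤ ms f s} ⊕ {j : ℕ // j ≤ ns f s})

/-- identify the two sources and the two targets of the chains -/
def LRel : LBase f → LBase f → Prop := fun v w =>
  (∃ s : f.left, v = ⟨s, Sum.inl ⟨0, Nat.zero_le _⟩⟩ ∧ w = ⟨s, Sum.inr ⟨0, Nat.zero_le _⟩⟩) ∨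
  (∃ s : f.left, v = ⟨s, Sum.inl ⟨ms f s, le_refl _⟩⟩ ∧ w = ⟨s, Sum.inr ⟨ns f s, le_refl _⟩⟩)

/-- vertices of the quiver classifying parallel pairs of paths of the given lengths -/
def LV : Type u := Quot (LRel f)

/-- arrow data -/
def LE : Type u := Σ s : f.left, ({i : ℕ // i < ms f s} ⊕ {j : ℕ // j < ns f s})

/-- the source of an arrow -/
def esrc : LE f → LV f
  | ⟨s, Sum.inl ⟨i, h⟩⟩ => Quot.mk _ ⟨s, Sum.inl ⟨i, le_of_lt h⟩⟩
  | ⟨s, Sum.inr ⟨j, h⟩⟩ => Quot.mk _ ⟨s, Sum.inr ⟨j, le_of_lt h⟩⟩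

/-- the target of an arrow -/
def etgt : LE f → LV f
  | ⟨s, Sum.inl ⟨i, h⟩⟩ => Quot.mk _ ⟨s, Sum.inl ⟨i+1, h⟩⟩
  | ⟨s, Sum.inr ⟨j, h⟩⟩ => Quot.mk _ ⟨s, Sum.inr ⟨j+1, h⟩⟩

instance : Quiver.{u} (LV f) := ⟨fun v w => {e : LE f // esrc f e = v ∧ etgt f e = w}⟩

/-- the value of the left adjoint -/
def Lobj : Quiv.{u,u} := Quiv.of (LV f)

section Forward

variable (X : Quiv.{u,u}) (F : Lobj f ⟶ X)

/-- vertex chain of the first path -/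
def aG (s : f.left) : {i : ℕ // i ≤ ms f s} → (X : Type u) := fun i =>
  F.obj (Quot.mk _ ⟨s, Sum.inl ⟨i.1, i.2⟩⟩)

/-- arrow chain of the first path -/
def aAr (s : f.left) (i : ℕ) (h : i < ms f s) :
    aG f X F s ⟨i, le_of_lt h⟩ ⟶ aG f X F s ⟨i+1, h⟩ :=
  F.map (X := esrc f ⟨s, Sum.inl ⟨i, h⟩⟩) (Y := etgt f ⟨s, Sum.inl ⟨i, h⟩⟩)
    ⟨⟨s, Sum.inl ⟨i, h⟩⟩, rfl, rfl⟩

/-- vertex chain of the second path -/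
def bG (s : f.left) : {j : ℕ // j ≤ ns f s} → (X : Type u) := fun j =>
  F.obj (Quot.mk _ ⟨s, Sum.inr ⟨j.1, j.2⟩⟩)

/-- arrow chain of the second path -/
def bAr (s : f.left) (j : ℕ) (h : j < ns f s) :
    bG f X F s ⟨j, le_of_lt h⟩ ⟶ bG f X F s ⟨j+1, h⟩ :=
  F.map (X := esrc f ⟨s, Sum.inr ⟨j, h⟩⟩) (Y := etgt f ⟨s, Sum.inr ⟨j, h⟩⟩)
    ⟨⟨s, Sum.inr ⟨j, h⟩⟩, rfl, rfl⟩

/-- the first path -/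
def aPath (s : f.left) :
    Quiver.Path (aG f X F s ⟨0, Nat.zero_le _⟩) (aG f X F s ⟨ms f s, le_refl _⟩) :=
  asm _ (aG f X F s) (aAr f X F s)

/-- the second path -/
def bPath (s : f.left) :
    Quiver.Path (bG f X F s ⟨0, Nat.zero_le _⟩) (bG f X F s ⟨ns f s, le_refl _⟩) :=
  asm _ (bG f X F s) (bAr f X F s)

lemma obj_eq0 (s : f.left) :
    aG f X F s ⟨0, Nat.zero_le _⟩ = bG f X F s ⟨0, Nat.zero_le _⟩ :=
  congrArg F.obj (Quot.sound (Or.inl ⟨s, rfl, rfl⟩))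

lemma obj_eqN (s : f.left) :
    aG f X F s ⟨ms f s, le_refl _⟩ = bG f X F s ⟨ns f s, le_refl _⟩ :=
  congrArg F.obj (Quot.sound (Or.inr ⟨s, rfl, rfl⟩))

/-- the underlying function of the comparison morphism -/
def phiFun : f.left → (paral.{u} ⟶ (Cat.free ⋙ Quiv.forget).obj X) := fun s =>
  { obj := fun v => match v with
      | .s => aG f X F s ⟨0, Nat.zero_le _⟩
      | .t => aG f X F s ⟨ms f s, le_refl _⟩
    map := fun {v w} e => match v, w, e with
      | _, _, .a => aPath f X F s
      | _, _, .b => pcast (obj_eq0 f X F s).symm (obj_eqN f X F s).symm (bPath f X F s) }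

lemma phi_w (s : f.left) :
    phiFun f X F s ≫ (Cat.free ⋙ Quiv.forget).map (terminal.from X)
      = (f.hom s : paral.{u} ⟶ (Cat.free ⋙ Quiv.forget).obj (⊤_ Quiv.{u,u})) := by
  apply hom_to_top_ext
  · rw [lenA_comp]
    show (aPath f X F s).length = ms f s
    exact asm_length _ _ _
  · rw [lenB_comp]
    show (pcast (obj_eq0 f X F s).symm (obj_eqN f X F s).symm (bPath f X F s)).length = ns f s
    rw [pcast_length]
    exact asm_length _ _ _

/-- the forward direction of the hom equivalence -/
def Phi : f ⟶ parallelPairsOfPaths.{u}.praComparison.obj X :=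
  Over.homMk (TypeCat.ofHom fun s => phiFun f X F s) (ConcreteCategory.hom_ext _ _ fun s => phi_w f X F s)

end Forward

section Backward

variable (X : Quiv.{u,u})

/-- the first path of a parallel pair -/
def pA (uf : f.left → (paral.{u} ⟶ (Cat.free ⋙ Quiv.forget).obj X)) (s : f.left) :
    Quiver.Path (V := (X : Type u)) ((uf s).obj ParalVertex.s) ((uf s).obj ParalVertex.t) :=
  asPath ((uf s).map ParalArrow.a)

/-- the second path of a parallel pair -/
def pB (uf : f.left → (paral.{u} ⟶ (Cat.free ⋙ Quiv.forget).obj X)) (s : f.left) :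
    Quiver.Path (V := (X : Type u)) ((uf s).obj ParalVertex.s) ((uf s).obj ParalVertex.t) :=
  asPath ((uf s).map ParalArrow.b)

variable (uf : f.left → (paral.{u} ⟶ (Cat.free ⋙ Quiv.forget).obj X))

/-- compatibility over the terminal quiver -/
abbrev HuP : Prop :=
  ∀ s, uf s ≫ (Cat.free ⋙ Quiv.forget).map (terminal.from X)
    = (f.hom s : paral.{u} ⟶ (Cat.free ⋙ Quiv.forget).obj (⊤_ Quiv.{u,u}))

variable (hu : HuP f X uf)

lemma pA_len (hu : HuP f X uf) (s : f.left) : (pA f X uf s).length = ms f s := by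
  have h := congrArg lenA (hu s)
  rw [lenA_comp] at h
  exact h

lemma pB_len (hu : HuP f X uf) (s : f.left) : (pB f X uf s).length = ns f s := by
  have h := congrArg lenB (hu s)
  rw [lenB_comp] at h
  exact h

/-- the object part of the inverse, on base vertices -/
def psiObjBase : LBase f → (X : Type u)
  | ⟨s, Sum.inl i⟩ => pvtx (pA f X uf s) (ms f s) i
  | ⟨s, Sum.inr j⟩ => pvtx (pB f X uf s) (ns f s) j

lemma psi_sound (hu : HuP f X uf) : ∀ v w, LRel f v w → psiObjBase f X uf v = psiObjBase f X uf w := by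
  intro v w h
  rcases h with ⟨s, rfl, rfl⟩ | ⟨s, rfl, rfl⟩
  · show pvtx (pA f X uf s) (ms f s) ⟨0, Nat.zero_le _⟩
      = pvtx (pB f X uf s) (ns f s) ⟨0, Nat.zero_le _⟩
    rw [pvtx_zero _ _ (pA_len f X uf hu s), pvtx_zero _ _ (pB_len f X uf hu s)]
  · show pvtx (pA f X uf s) (ms f s) ⟨ms f s, le_refl _⟩
      = pvtx (pB f X uf s) (ns f s) ⟨ns f s, le_refl _⟩
    erw [pvtx_last, pvtx_last]

/-- the object part of the inverse -/
def psiObj (hu : HuP f X uf) : LV f → (X : Type u) :=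
  Quot.lift (psiObjBase f X uf) (psi_sound f X uf hu)

/-- the arrow part of the inverse, on arrow data -/
def psiArr (hu : HuP f X uf) : (e : LE f) → (psiObj f X uf hu (esrc f e) ⟶ psiObj f X uf hu (etgt f e))
  | ⟨s, Sum.inl ⟨i, h⟩⟩ => parr (pA f X uf s) (ms f s) (pA_len f X uf hu s) i h
  | ⟨s, Sum.inr ⟨j, h⟩⟩ => parr (pB f X uf s) (ns f s) (pB_len f X uf hu s) j h

/-- the inverse direction of the hom equivalence -/
def Psi (hu : HuP f X uf) : Lobj f ⟶ X where
  obj := psiObj f X uf hu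
  map {x y} ar := qcast (congrArg (psiObj f X uf hu) ar.2.1)
    (congrArg (psiObj f X uf hu) ar.2.2) (psiArr f X uf hu ar.1)

end Backward

/-- the hom-set equivalence exhibiting the left adjoint -/
def homEquiv (X : Quiv.{u,u}) :
    (Lobj f ⟶ X) ≃ (f ⟶ parallelPairsOfPaths.{u}.praComparison.obj X) where
  toFun F := Phi f X F
  invFun v := Psi f X (fun s => v.left s) (fun s => types_congr_hom (Over.w v) s)
  left_inv F := by
    apply prefunctor_ext'
    · intro vq
      induction vq using Quot.ind with
      | _ v =>
        obtain ⟨s, x⟩ := v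
        cases x with
        | inl i =>
          exact (vtxE_asm (ms f s) (aG f X F s) (aAr f X F s) (ms f s - i.1) (by omega)).trans
            (congrArg (aG f X F s) (Subtype.ext (by have := i.2; simp; omega)))
        | inr j =>
          exact ((vtxE_pcast (obj_eq0 f X F s).symm (obj_eqN f X F s).symm (bPath f X F s)
              (ns f s - j.1)).trans
            (vtxE_asm (ns f s) (bG f X F s) (bAr f X F s) (ns f s - j.1) (by omega))).trans
            (congrArg (bG f X F s) (Subtype.ext (by have := j.2; simp; omega)))
    · intro x y ar
      obtain ⟨e, h1, h2⟩ := ar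
      subst h1; subst h2
      obtain ⟨s, x⟩ := e
      cases x with
      | inl i =>
        obtain ⟨i, h⟩ := i
        exact ((qcast_heq
            (vtxE_congr (aPath f X F s) (show ms f s - i - 1 + 1 = ms f s - i by omega)) rfl
            (arrE (ms f s - i - 1) (aPath f X F s) (by simp [aPath]; omega))).trans
          ((arrE_asm (ms f s) (aG f X F s) (aAr f X F s) (ms f s - i - 1)
            (by simp; omega) (by omega)).trans
          (ar_hcongr (aAr f X F s) (show ms f s - 1 - (ms f s - i - 1) = i by omega) _ h)))
      | inr j =>
        obtain ⟨j, h⟩ := j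
        exact ((qcast_heq
            (vtxE_congr (pcast (obj_eq0 f X F s).symm (obj_eqN f X F s).symm (bPath f X F s))
              (show ns f s - j - 1 + 1 = ns f s - j by omega)) rfl
            (arrE (ns f s - j - 1)
              (pcast (obj_eq0 f X F s).symm (obj_eqN f X F s).symm (bPath f X F s))
              (by simp [bPath]; omega))).trans
          (((arrE_pcast (obj_eq0 f X F s).symm (obj_eqN f X F s).symm (bPath f X F s)
            (ns f s - j - 1) (by simp [bPath]; omega)).trans
          ((arrE_asm (ns f s) (bG f X F s) (bAr f X F s) (ns f s - j - 1)
            (by simp; omega) (by omega)).trans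
          (ar_hcongr (bAr f X F s) (show ns f s - 1 - (ns f s - j - 1) = j by omega) _ h)))))
  right_inv v := by
    apply Over.OverMorphism.ext
    refine ConcreteCategory.hom_ext _ _ fun s => ?_
    apply prefunctor_ext'
    · intro pv
      cases pv with
      | s =>
        exact pvtx_zero (X := (X : Type u)) _ _
          (pA_len f X (fun s => v.left s) (fun s => types_congr_hom (Over.w v) s) s)
      | t =>
        exact pvtx_last (X := (X : Type u)) _ _
    · intro x y g
      change ParalArrow x y at g
      cases g with
      | a =>
        refine HEq.trans ?_ (asm_reassemble (X := (X : Type u))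
          (pA f X (fun s => v.left s) s) (ms f s)
          (pA_len f X (fun s => v.left s) (fun s => types_congr_hom (Over.w v) s) s))
        refine asm_congr (fun i => rfl) (fun i h => ?_)
        exact qcast_heq rfl rfl (psiArr f X (fun s => v.left s)
          (fun s => types_congr_hom (Over.w v) s) ⟨s, Sum.inl ⟨i, h⟩⟩)
      | b =>
        apply HEq.trans (pcast_heq (X := (X : Type u)) _ _ _)
        refine HEq.trans ?_ (asm_reassemble (X := (X : Type u))
          (pB f X (fun s => v.left s) s) (ns f s)
          (pB_len f X (fun s => v.left s) (fun s => types_congr_hom (Over.w v) s) s))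
        refine asm_congr (fun i => rfl) (fun i h => ?_)
        exact qcast_heq rfl rfl (psiArr f X (fun s => v.left s)
          (fun s => types_congr_hom (Over.w v) s) ⟨s, Sum.inr ⟨i, h⟩⟩)

lemma homEquiv_natural (X X' : Quiv.{u,u}) (g : X ⟶ X') (h : Lobj f ⟶ X) :
    homEquiv f X' (h ≫ g) = homEquiv f X h ≫ parallelPairsOfPaths.{u}.praComparison.map g := by
  apply Over.OverMorphism.ext
  refine ConcreteCategory.hom_ext _ _ fun s => ?_
  apply prefunctor_ext'
  · intro pv
    cases pv with
    | s => rfl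
    | t => rfl
  · intro x y e
    change ParalArrow x y at e
    cases e with
    | a => exact heq_of_eq (mapPath_asm g _ _ _).symm
    | b =>
      refine ((pcast_heq _ _ _).trans ?_).trans (mapPath_pcast g _ _ _).symm
      exact heq_of_eq
        (show g.mapPath (bPath f X h s) = bPath f X' (h ≫ g) s from mapPath_asm g _ _ _).symm

end Main


end ParametricRightAdjointAux

/-- The functor sending a quiver to its set of parallel pairs of paths is a parametric right
adjoint. -/
theorem parallelPairsOfPaths_isParametricRightAdjoint :
    parallelPairsOfPaths.{u}.IsParametricRightAdjoint := by
  show parallelPairsOfPaths.{u}.praComparison.IsRightAdjoint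
  exact ⟨⟨Adjunction.leftAdjointOfEquiv
      (fun fo X => ParametricRightAdjointAux.homEquiv fo X)
      (fun fo X X' g h => ParametricRightAdjointAux.homEquiv_natural fo X X' g h),
    ⟨Adjunction.adjunctionOfEquivLeft _ _⟩⟩⟩
end
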